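/- arXiv:math/0701096 — 5 statements merged into one kernel-verified Lean document; each statement's English description precedes it below -/
import Mathlib

section
/- Fix S, T ⊆ [n] with |S| = |T|. Define a lattice path L(S,T) from (0,0) with two steps for each i = 1,…,n in order: if i ∈ S∩T, steps (1,0),(1,0); if i ∈ S\T, steps (1,0),(1,1); if i ∈ T\S, steps (1,−1),(1,0); if i ∉ S∪T, steps (1,−1),(1,1). Then P_n(S,T) is nonempty if and only if L(S,T) never goes below the x-axis. -/
open Finset
open scoped Classical

/-- descents of a list: number of positions i with l_i > l_{i+1} -/
def desList (l : List ℕ) : ℕ := ((l.zip l.tail).filter (fun p => p.2 < p.1)).length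

/-- major index of a list (1-based positions) -/
def majList (l : List ℕ) : ℕ :=
  ∑ i ∈ Finset.range (l.length - 1), if l.getD (i+1) 0 < l.getD i 0 then i + 1 else 0

/-- inversion number of a list -/
def invList (l : List ℕ) : ℕ :=
  ((Finset.range l.length ×ˢ Finset.range l.length).filter
    (fun p => p.1 < p.2 ∧ l.getD p.2 0 < l.getD p.1 0)).card

/-- number of 2-crossings of an arc set -/
def cr2 {α : Type*} [LinearOrder α] (A : Finset (α × α)) : ℕ :=
  ((A ×ˢ A).filter (fun p => p.1.1 < p.2.1 ∧ p.2.1 < p.1.2 ∧ p.1.2 < p.2.2)).card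

/-- the label of an arc: arcs are labeled 1,…,k from right to left by left-hand endpoints -/
def labelArc {α : Type*} [LinearOrder α] (A : Finset (α × α)) (e : α × α) : ℕ :=
  (A.filter (fun f => e.1 < f.1)).card + 1

/-- p-major index of an arc set: process endpoints in decreasing order, maintaining the
sequence σ of (arcs corresponding to) labels; at a left endpoint delete its arc, at a
right endpoint prepend the arc ending there and add the number of descents of the
label sequence σ. -/
noncomputable def pmajArcs {α : Type*} [LinearOrder α] (A : Finset (α × α)) : ℕ :=
  (((((A.image Prod.fst) ∪ (A.image Prod.snd)).sort (· ≤ ·)).reverse).foldl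
    (fun (st : List (α × α) × ℕ) i =>
      let σ₁ := st.1.filter (fun e => e.1 ≠ i)
      let ends := (A.filter (fun e => e.2 = i)).toList
      let σ₂ := ends ++ σ₁
      (σ₂, st.2 + if ends.isEmpty then 0 else desList (σ₂.map (labelArc A))))
    ([], 0)).2

/-- arcs of the standard representation of a partition of [n] = {1,…,n}:
pairs of consecutive elements of a block -/
noncomputable def arcsOf {n : ℕ} (P : Finpartition (Finset.Icc 1 n)) : Finset (ℕ × ℕ) :=
  ((Finset.Icc 1 n) ×ˢ (Finset.Icc 1 n)).filter (fun e =>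
    e.1 < e.2 ∧ ∃ B ∈ P.parts, e.1 ∈ B ∧ e.2 ∈ B ∧ ∀ k ∈ B, e.1 < k → k < e.2 → False)

/-- the set of minimal block elements of a partition of [n] -/
noncomputable def minsetOf {n : ℕ} (P : Finpartition (Finset.Icc 1 n)) : Finset ℕ :=
  (Finset.Icc 1 n).filter (fun i => ∃ B ∈ P.parts, i ∈ B ∧ ∀ j ∈ B, i ≤ j)

/-- the set of maximal block elements of a partition of [n] -/
noncomputable def maxsetOf {n : ℕ} (P : Finpartition (Finset.Icc 1 n)) : Finset ℕ :=
  (Finset.Icc 1 n).filter (fun i => ∃ B ∈ P.parts, i ∈ B ∧ ∀ j ∈ B, j ≤ i)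

noncomputable instance finpartitionFintype (s : Finset ℕ) : Fintype (Finpartition s) := by
  apply Fintype.ofInjective
    (fun P : Finpartition s =>
      (⟨P.parts, by
        simp only [Finset.mem_powerset]
        intro t ht
        exact Finset.mem_powerset.2 (P.le ht)⟩ : {t // t ∈ s.powerset.powerset}))
  intro P Q h
  have : P.parts = Q.parts := congrArg Subtype.val h
  cases P; cases Q; simpa using this

/-- P_n(S,T): partitions of [n] with block minima S and block maxima T -/
noncomputable def pnST (n : ℕ) (S T : Finset ℕ) : Finset (Finpartition (Finset.Icc 1 n)) :=
  Finset.univ.filter (fun P => minsetOf P = S ∧ maxsetOf P = T)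

/-- h(i) = |T ∩ {i+1,…,n}| − |S ∩ {i+1,…,n}| -/
def hST (n : ℕ) (S T : Finset ℕ) (i : ℕ) : ℕ :=
  (T ∩ Finset.Icc (i+1) n).card - (S ∩ Finset.Icc (i+1) n).card

/-- major index of a permutation of [n], via its word π(1)…π(n) -/
def majPerm {n : ℕ} (π : Equiv.Perm (Fin n)) : ℕ := majList (List.ofFn (fun i => (π i : ℕ) + 1))

/-- inversion number of a permutation of [n] -/
def invPerm {n : ℕ} (π : Equiv.Perm (Fin n)) : ℕ := invList (List.ofFn (fun i => (π i : ℕ) + 1))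

/-- the matching M_π of [2m] with arcs (m+1-π(i), i+m) for 1 ≤ i ≤ m -/
def Mpi (m : ℕ) (π : Equiv.Perm (Fin m)) : Finset (ℕ × ℕ) :=
  Finset.univ.image (fun i : Fin m => (m + 1 - ((π i : ℕ) + 1), ((i : ℕ) + 1) + m))

/-- vertical displacement of the k-th step (k = 1,…,2n) of the lattice path L(S,T):
the two steps for vertex i are steps 2i-1 and 2i; the first step goes down unless i ∈ S,
the second goes up unless i ∈ T. -/
def stepDelta (S T : Finset ℕ) (k : ℕ) : ℤ :=
  if k % 2 = 1 then (if (k + 1) / 2 ∈ S then 0 else -1) else (if k / 2 ∈ T then 0 else 1)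

/-- the height (y-coordinate) of the lattice path L(S,T) after k steps -/
def pathHt (S T : Finset ℕ) (k : ℕ) : ℤ := ∑ j ∈ Finset.Icc 1 k, stepDelta S T j

namespace MZ


variable (S T : Finset ℕ)

def sc (i : ℕ) : ℕ := (S ∩ Finset.Icc 1 i).card
def tc (i : ℕ) : ℕ := (T ∩ Finset.Icc 1 i).card

lemma sc_zero : sc S 0 = 0 := by simp [sc]

lemma sc_succ (i : ℕ) : sc S (i+1) = sc S i + (if i+1 ∈ S then 1 else 0) := by
  unfold sc
  have h : Finset.Icc 1 (i+1) = insert (i+1) (Finset.Icc 1 i) := by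
    ext x; simp only [Finset.mem_Icc, Finset.mem_insert]; omega
  by_cases hi : i+1 ∈ S
  · rw [h, Finset.inter_insert_of_mem hi, Finset.card_insert_of_notMem (by simp)]
    simp [hi]
  · rw [h, Finset.inter_insert_of_notMem hi]
    simp [hi]

lemma pathHt_succ (k : ℕ) : pathHt S T (k+1) = pathHt S T k + stepDelta S T (k+1) := by
  unfold pathHt
  rw [Finset.sum_Icc_succ_top (by omega)]

lemma stepDelta_odd (i : ℕ) : stepDelta S T (2*i+1) = if i+1 ∈ S then 0 else -1 := by
  unfold stepDelta
  have h1 : (2*i+1) % 2 = 1 := by omega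
  have h2 : (2*i+1+1)/2 = i+1 := by omega
  simp [h1, h2]

lemma stepDelta_even (i : ℕ) : stepDelta S T (2*i+2) = if i+1 ∈ T then 0 else 1 := by
  unfold stepDelta
  have h1 : ¬ ((2*i+2) % 2 = 1) := by omega
  have h2 : (2*i+2)/2 = i+1 := by omega
  simp [h1, h2]

lemma pathHt_even (i : ℕ) : pathHt S T (2*i) = (sc S i : ℤ) - (tc T i : ℤ) := by
  induction i with
  | zero => simp [pathHt, sc, tc]
  | succ i ih =>
      have : 2*(i+1) = (2*i+1)+1 := by ring
      rw [this, pathHt_succ, pathHt_succ, ih]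
      have h2 : (2*i+1+1) = 2*i+2 := by ring
      rw [h2, stepDelta_odd, stepDelta_even, sc_succ, show tc T (i+1) = tc T i + (if i+1 ∈ T then 1 else 0) from sc_succ T i]
      show _ = ((sc S i + _ : ℕ) : ℤ) - ((tc T i + _ : ℕ) : ℤ)
      by_cases h1 : i+1 ∈ S <;> by_cases h3 : i+1 ∈ T <;> simp [h1, h3, tc, sc] <;> push_cast <;> ring

lemma pathHt_odd (i : ℕ) :
    pathHt S T (2*i+1) = (sc S i : ℤ) - (tc T i : ℤ) + (if i+1 ∈ S then 0 else -1) := by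
  rw [pathHt_succ, pathHt_even, stepDelta_odd]


noncomputable def stk : ℕ → List ℕ
  | 0 => []
  | (i+1) =>
      let p := if (i+1) ∈ S then (i+1) :: stk i else stk i
      if (i+1) ∈ T then p.tail else p

noncomputable def pre (i : ℕ) : List ℕ :=
  if i ∈ S then i :: stk S T (i-1) else stk S T (i-1)

noncomputable def g (i : ℕ) : ℕ := (pre S T i).headD 0

lemma stk_succ (i : ℕ) :
    stk S T (i+1) = if (i+1) ∈ T then (pre S T (i+1)).tail else pre S T (i+1) := by
  simp only [stk, pre, Nat.add_sub_cancel]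

lemma mem_stk {m : ℕ} : ∀ {i : ℕ}, m ∈ stk S T i → m ∈ S ∧ 1 ≤ m ∧ m ≤ i := by
  intro i
  induction i with
  | zero => intro h; simp [stk] at h
  | succ i ih =>
      intro h
      rw [stk_succ] at h
      have h2 : m ∈ pre S T (i+1) := by
        by_cases ht : (i+1) ∈ T
        · exact List.mem_of_mem_tail (by simpa [ht] using h)
        · simpa [ht] using h
      unfold pre at h2
      by_cases hs : (i+1) ∈ S
      · simp only [hs, if_true, List.mem_cons, Nat.add_sub_cancel] at h2
        rcases h2 with rfl | h2
        · exact ⟨hs, by omega, le_refl _⟩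
        · obtain ⟨h3, h4, h5⟩ := ih h2
          exact ⟨h3, h4, by omega⟩
      · simp only [hs, if_false, Nat.add_sub_cancel] at h2
        obtain ⟨h3, h4, h5⟩ := ih h2
        exact ⟨h3, h4, by omega⟩

lemma mem_pre (h0 : 0 ∉ S) {m i : ℕ} (h : m ∈ pre S T i) : m ∈ S ∧ 1 ≤ m ∧ m ≤ i := by
  unfold pre at h
  by_cases hs : i ∈ S
  · simp only [hs, if_true, List.mem_cons] at h
    rcases h with rfl | h
    · refine ⟨hs, ?_, le_refl _⟩
      rcases Nat.eq_zero_or_pos m with rfl | h1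
      · exact absurd hs h0
      · exact h1
    · obtain ⟨h3, h4, h5⟩ := mem_stk S T h
      exact ⟨h3, h4, by omega⟩
  · simp only [hs, if_false] at h
    obtain ⟨h3, h4, h5⟩ := mem_stk S T h
    exact ⟨h3, h4, by omega⟩

lemma stk_nodup : ∀ i, (stk S T i).Nodup := by
  intro i
  induction i with
  | zero => simp [stk]
  | succ i ih =>
      rw [stk_succ]
      have hp : (pre S T (i+1)).Nodup := by
        unfold pre
        by_cases hs : (i+1) ∈ S
        · simp only [hs, if_true, Nat.add_sub_cancel]
          refine List.nodup_cons.2 ⟨fun hmem => ?_, ih⟩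
          have := (mem_stk S T hmem).2.2
          omega
        · simpa [hs] using ih
      by_cases ht : (i+1) ∈ T
      · simpa [ht] using hp.sublist (List.tail_sublist _)
      · simpa [ht] using hp

lemma pre_nodup (h0 : 0 ∉ S) (i : ℕ) : (pre S T i).Nodup := by
  unfold pre
  by_cases hs : i ∈ S
  · simp only [hs, if_true]
    refine List.nodup_cons.2 ⟨fun hmem => ?_, stk_nodup S T _⟩
    have h1 := (mem_stk S T hmem).2.2
    have h2 : 1 ≤ i := by
      rcases Nat.eq_zero_or_pos i with rfl | h2
      · exact absurd hs h0
      · exact h2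
    omega
  · simpa [hs] using stk_nodup S T _


lemma mem_pre_cases {m i : ℕ} (h : m ∈ pre S T i) : m = i ∨ m ∈ stk S T (i-1) := by
  unfold pre at h
  by_cases hs : i ∈ S
  · simp only [hs, if_true, List.mem_cons] at h
    exact h
  · right; simpa [hs] using h

lemma mem_stk_succ {m j : ℕ} (h : m ∈ stk S T (j+1)) : m = j+1 ∨ m ∈ stk S T j := by
  rw [stk_succ] at h
  have h2 : m ∈ pre S T (j+1) := by
    by_cases ht : (j+1) ∈ T
    · exact List.mem_of_mem_tail (by simpa [ht] using h)
    · simpa [ht] using h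
  simpa using mem_pre_cases S T h2

lemma stk_length (n : ℕ)
    (Hodd : ∀ i, 1 ≤ i → i ≤ n → i ∉ S → tc T (i-1) < sc S (i-1)) :
    ∀ i ≤ n, (stk S T i).length + tc T i = sc S i := by
  intro i
  induction i with
  | zero => intro _; simp [stk, sc, tc]
  | succ i ih =>
      intro hn
      have ih' := ih (by omega)
      rw [stk_succ, sc_succ, show tc T (i+1) = tc T i + (if i+1 ∈ T then 1 else 0) from sc_succ T i]
      by_cases ht : (i+1) ∈ T <;> by_cases hs : (i+1) ∈ S <;>
        rw [show pre S T (i+1) = (if (i+1) ∈ S then (i+1) :: stk S T i else stk S T i) from by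
          simp [pre]]
      · simp only [ht, hs, if_true, List.tail_cons]
        omega
      · have hne : tc T i < sc S i := by
          have := Hodd (i+1) (by omega) hn hs
          simpa using this
        have hlen : 1 ≤ (stk S T i).length := by omega
        simp only [ht, hs, if_true, if_false, List.length_tail]
        omega
      · simp only [ht, hs, if_true, if_false, List.length_cons]
        omega
      · simp only [ht, hs, if_false]
        omega

lemma pre_nonempty (n : ℕ)
    (Hodd : ∀ i, 1 ≤ i → i ≤ n → i ∉ S → tc T (i-1) < sc S (i-1))
    {i : ℕ} (h1 : 1 ≤ i) (h2 : i ≤ n) : pre S T i ≠ [] := by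
  by_cases hs : i ∈ S
  · simp [pre, hs]
  · have hod := Hodd i h1 h2 hs
    have hl := stk_length S T n Hodd (i-1) (by omega)
    have hlen : 1 ≤ (stk S T (i-1)).length := by omega
    have : stk S T (i-1) ≠ [] := by
      intro hnil; rw [hnil] at hlen; simp at hlen
    simpa [pre, hs] using this

lemma g_mem_pre (i : ℕ) (hne : pre S T i ≠ []) : g S T i ∈ pre S T i := by
  obtain ⟨a, l, hl⟩ := List.exists_cons_of_ne_nil hne
  unfold g
  rw [hl]
  simp

lemma g_self {m : ℕ} (h : m ∈ S) : g S T m = m := by simp [g, pre, h]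

lemma g_spec (h0 : 0 ∉ S) (n : ℕ)
    (Hodd : ∀ i, 1 ≤ i → i ≤ n → i ∉ S → tc T (i-1) < sc S (i-1))
    {i : ℕ} (h1 : 1 ≤ i) (h2 : i ≤ n) :
    g S T i ∈ S ∧ 1 ≤ g S T i ∧ g S T i ≤ i :=
  mem_pre S T h0 (g_mem_pre S T i (pre_nonempty S T n Hodd h1 h2))

lemma not_mem_stk_mono {m t : ℕ} (hmt : m ≤ t) (h : m ∉ stk S T t) :
    ∀ j, t ≤ j → m ∉ stk S T j := by
  intro j
  induction j with
  | zero =>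
      intro hj
      have : t = 0 := by omega
      rwa [this] at h
  | succ j ih =>
      intro hj
      rcases Nat.lt_or_ge j t with hlt | hge
      · have : t = j + 1 := by omega
        rwa [this] at h
      · intro hmem
        rcases mem_stk_succ S T hmem with rfl | h2
        · omega
        · exact ih hge h2

lemma g_not_mem_stk_self (h0 : 0 ∉ S) {t : ℕ} (ht : t ∈ T) (hne : pre S T t ≠ []) :
    g S T t ∉ stk S T t := by
  rcases t with _ | j
  · simp [stk]
  · rw [stk_succ]
    simp only [ht, if_true]
    obtain ⟨a, l, hl⟩ := List.exists_cons_of_ne_nil hne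
    have hnd := pre_nodup S T h0 (j+1)
    rw [hl] at hnd ⊢
    unfold g
    rw [hl]
    simpa using (List.nodup_cons.1 hnd).1

lemma le_of_g_eq (h0 : 0 ∉ S) (n : ℕ)
    (Hodd : ∀ i, 1 ≤ i → i ≤ n → i ∉ S → tc T (i-1) < sc S (i-1))
    {t j : ℕ} (ht : t ∈ T) (ht1 : 1 ≤ t) (ht2 : t ≤ n)
    (hj2 : j ≤ n) (hg : g S T j = g S T t) : j ≤ t := by
  by_contra hc
  push_neg at hc
  have hne := pre_nonempty S T n Hodd ht1 ht2
  have hm := mem_pre S T h0 (g_mem_pre S T t hne)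
  have hnot : g S T t ∉ stk S T t := g_not_mem_stk_self S T h0 ht hne
  have hnotj : g S T t ∉ stk S T (j-1) :=
    not_mem_stk_mono S T hm.2.2 hnot (j-1) (by omega)
  have hnej : pre S T j ≠ [] := by
    intro hnil
    have : g S T j = 0 := by unfold g; rw [hnil]; rfl
    omega
  have hmj : g S T t ∈ pre S T j := hg ▸ g_mem_pre S T j hnej
  rcases mem_pre_cases S T hmj with heq | h2
  · omega
  · exact hnotj h2

lemma exists_later (h0 : 0 ∉ S) (n : ℕ)
    (Hodd : ∀ i, 1 ≤ i → i ≤ n → i ∉ S → tc T (i-1) < sc S (i-1))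
    (hfin : stk S T n = [])
    {i : ℕ} (h1 : 1 ≤ i) (h2 : i ≤ n) (hiT : i ∉ T) :
    ∃ j, i < j ∧ j ≤ n ∧ g S T j = g S T i := by
  have hne := pre_nonempty S T n Hodd h1 h2
  have hmem : g S T i ∈ stk S T i := by
    have hst : stk S T i = pre S T i := by
      obtain ⟨i', rfl⟩ : ∃ i', i = i' + 1 := ⟨i-1, by omega⟩
      rw [stk_succ]
      simp [hiT]
    rw [hst]
    exact g_mem_pre S T i hne
  have key : ∀ d, g S T i ∈ stk S T i → g S T i ∉ stk S T (i+d) →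
      ∃ j, i < j ∧ j ≤ i + d ∧ g S T i ∈ stk S T (j-1) ∧ g S T i ∉ stk S T j := by
    intro d
    induction d with
    | zero => intro ha hb; exact absurd ha hb
    | succ d ih =>
        intro ha hb
        by_cases hc : g S T i ∈ stk S T (i+d)
        · refine ⟨i+d+1, by omega, by omega, by simpa using hc, ?_⟩
          rwa [show i+d+1 = i+(d+1) from by omega]
        · obtain ⟨j, hj1, hj2, hj3, hj4⟩ := ih ha hc
          exact ⟨j, hj1, by omega, hj3, hj4⟩
  obtain ⟨j, hij, hjn, hin, hout⟩ := key (n-i) hmem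
    (by rw [show i+(n-i) = n from by omega, hfin]; simp)
  refine ⟨j, hij, by omega, ?_⟩
  obtain ⟨j', rfl⟩ : ∃ j', j = j' + 1 := ⟨j-1, by omega⟩
  have hin' : g S T i ∈ stk S T j' := by simpa using hin
  have hpre : g S T i ∈ pre S T (j'+1) := by
    unfold pre
    by_cases hs : (j'+1) ∈ S
    · simp only [hs, if_true, List.mem_cons, Nat.add_sub_cancel]
      right; exact hin'
    · simpa [hs] using hin'
  have hT' : (j'+1) ∈ T := by
    by_contra hT''
    rw [stk_succ] at hout
    simp only [hT'', if_false] at hout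
    exact hout hpre
  rw [stk_succ] at hout
  simp only [hT', if_true] at hout
  obtain ⟨a, l, hl⟩ := List.exists_cons_of_ne_nil (List.ne_nil_of_mem hpre)
  rw [hl] at hpre hout
  have ha : g S T i = a := by
    rcases List.mem_cons.1 hpre with h | h
    · exact h
    · exact absurd h (by simpa using hout)
  have hga : g S T (j'+1) = a := by unfold g; rw [hl]; rfl
  rw [hga, ha]


lemma construct (n : ℕ) (hS : S ⊆ Finset.Icc 1 n) (hT : T ⊆ Finset.Icc 1 n)
    (hcard : S.card = T.card)
    (Hodd : ∀ i, 1 ≤ i → i ≤ n → i ∉ S → tc T (i-1) < sc S (i-1)) :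
    ∃ P : Finpartition (Finset.Icc 1 n), minsetOf P = S ∧ maxsetOf P = T := by
  have h0 : 0 ∉ S := fun h => by simpa using hS h
  set f : ℕ → Finset ℕ := fun m => (Finset.Icc 1 n).filter (fun i => g S T i = m) with hf
  have hgS : ∀ i ∈ Finset.Icc 1 n, g S T i ∈ S ∧ 1 ≤ g S T i ∧ g S T i ≤ i := by
    intro i hi; rw [Finset.mem_Icc] at hi; exact g_spec S T h0 n Hodd hi.1 hi.2
  have hmemS : ∀ m ∈ S, m ∈ f m := by
    intro m hm
    simp only [hf, Finset.mem_filter]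
    exact ⟨hS hm, g_self S T hm⟩
  have hfin : stk S T n = [] := by
    have hl := stk_length S T n Hodd n le_rfl
    have hsc : sc S n = S.card := by unfold sc; rw [Finset.inter_eq_left.2 hS]
    have htc : tc T n = T.card := by unfold tc; rw [Finset.inter_eq_left.2 hT]
    have : (stk S T n).length = 0 := by omega
    exact List.length_eq_zero_iff.1 this
  refine ⟨⟨S.image f, ?_, ?_, ?_⟩, ?_, ?_⟩
  · rw [Finset.supIndep_iff_pairwiseDisjoint]
    intro B₁ h1 B₂ h2 hne
    simp only [Finset.coe_image, Set.mem_image, Finset.mem_coe] at h1 h2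
    obtain ⟨m₁, hm₁, rfl⟩ := h1
    obtain ⟨m₂, hm₂, rfl⟩ := h2
    simp only [Function.onFun, id]
    refine Finset.disjoint_left.2 ?_
    intro x hx1 hx2
    simp only [hf, Finset.mem_filter] at hx1 hx2
    exact hne (by rw [← hx1.2, ← hx2.2])
  · apply le_antisymm
    · refine Finset.sup_le ?_
      intro B hB
      obtain ⟨m, hm, rfl⟩ := Finset.mem_image.1 hB
      exact Finset.filter_subset _ _
    · intro x hx
      rw [Finset.mem_sup]
      refine ⟨f (g S T x), Finset.mem_image_of_mem f (hgS x hx).1, ?_⟩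
      simp only [hf, Finset.mem_filter, id]
      exact ⟨hx, trivial⟩
  · intro hbot
    obtain ⟨m, hm, heq⟩ := Finset.mem_image.1 hbot
    have := hmemS m hm
    rw [heq] at this
    simp at this
  · ext i
    unfold minsetOf
    simp only [Finset.mem_filter]
    constructor
    · rintro ⟨hi, B, hB, hiB, hmin⟩
      obtain ⟨m, hm, rfl⟩ := Finset.mem_image.1 hB
      simp only [hf, Finset.mem_filter] at hiB
      have h1 : i ≤ m := hmin m (hmemS m hm)
      have h2 : m ≤ i := by rw [← hiB.2]; exact (hgS i hi).2.2
      have him : i = m := le_antisymm h1 h2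
      rw [him]; exact hm
    · intro hiS
      refine ⟨hS hiS, f i, Finset.mem_image_of_mem f hiS, hmemS i hiS, ?_⟩
      intro j hj
      simp only [hf, Finset.mem_filter] at hj
      have h1 := (hgS j hj.1).2.2
      omega
  · ext i
    unfold maxsetOf
    simp only [Finset.mem_filter]
    constructor
    · rintro ⟨hi, B, hB, hiB, hmax⟩
      by_contra hiT
      rw [Finset.mem_Icc] at hi
      obtain ⟨j, hij, hjn, hgj⟩ := exists_later S T h0 n Hodd hfin hi.1 hi.2 hiT
      obtain ⟨m, hm, rfl⟩ := Finset.mem_image.1 hB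
      simp only [hf, Finset.mem_filter] at hiB
      have hjB : j ∈ f m := by
        simp only [hf, Finset.mem_filter, Finset.mem_Icc]
        exact ⟨⟨by omega, hjn⟩, by rw [hgj, hiB.2]⟩
      have := hmax j hjB
      omega
    · intro hiT
      have hi := hT hiT
      rw [Finset.mem_Icc] at hi
      refine ⟨hT hiT, f (g S T i),
        Finset.mem_image_of_mem f (g_spec S T h0 n Hodd hi.1 hi.2).1, ?_, ?_⟩
      · simp only [hf, Finset.mem_filter, Finset.mem_Icc]
        exact ⟨⟨hi.1, hi.2⟩, trivial⟩
      · intro j hj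
        simp only [hf, Finset.mem_filter, Finset.mem_Icc] at hj
        exact le_of_g_eq S T h0 n Hodd hiT hi.1 hi.2 hj.1.2 hj.2

lemma forward (n : ℕ) (P : Finpartition (Finset.Icc 1 n))
    (hmin : minsetOf P = S) (hmax : maxsetOf P = T) :
    (∀ i, tc T i ≤ sc S i) ∧ (∀ i, 1 ≤ i → i ≤ n → i ∉ S → tc T (i-1) < sc S (i-1)) := by
  classical
  set φ : ℕ → ℕ := fun t =>
    if h : t ∈ Finset.Icc 1 n then (P.part t).min' ⟨t, P.mem_part h⟩ else 0 with hφ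
  have hφmem : ∀ t (h : t ∈ Finset.Icc 1 n), φ t ∈ P.part t := by
    intro t h
    simp only [hφ, dif_pos h]
    exact Finset.min'_mem _ _
  have hφle : ∀ t (h : t ∈ Finset.Icc 1 n), ∀ j ∈ P.part t, φ t ≤ j := by
    intro t h j hj
    simp only [hφ, dif_pos h]
    exact Finset.min'_le _ _ hj
  have hφS : ∀ t (h : t ∈ Finset.Icc 1 n), φ t ∈ S := by
    intro t h
    rw [← hmin]
    unfold minsetOf
    rw [Finset.mem_filter]
    exact ⟨P.le (P.part_mem.2 h) (hφmem t h), P.part t, P.part_mem.2 h, hφmem t h, hφle t h⟩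
  have hTmax : ∀ t ∈ T, ∀ j ∈ P.part t, j ≤ t := by
    intro t ht j hj
    rw [← hmax] at ht
    unfold maxsetOf at ht
    rw [Finset.mem_filter] at ht
    obtain ⟨B, hB, htB, hmaxB⟩ := ht.2
    have : P.part t = B := P.part_eq_of_mem hB htB
    exact hmaxB j (this ▸ hj)
  have hTIcc : T ⊆ Finset.Icc 1 n := by
    rw [← hmax]; unfold maxsetOf; exact Finset.filter_subset _ _
  have hinj : ∀ t₁ ∈ T, ∀ t₂ ∈ T, φ t₁ = φ t₂ → t₁ = t₂ := by
    intro t₁ h1 t₂ h2 heq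
    have hi1 := hTIcc h1
    have hi2 := hTIcc h2
    have hx1 := hφmem t₁ hi1
    have hx2 : φ t₁ ∈ P.part t₂ := by rw [heq]; exact hφmem t₂ hi2
    have hpp : P.part t₁ = P.part t₂ :=
      P.eq_of_mem_parts (P.part_mem.2 hi1) (P.part_mem.2 hi2) hx1 hx2
    have e1 : t₁ ≤ t₂ := hTmax t₂ h2 t₁ (hpp ▸ P.mem_part hi1)
    have e2 : t₂ ≤ t₁ := hTmax t₁ h1 t₂ (hpp ▸ P.mem_part hi2)
    omega
  have hφle' : ∀ t (h : t ∈ Finset.Icc 1 n), φ t ≤ t := by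
    intro t h
    exact hφle t h t (P.mem_part h)
  constructor
  · intro i
    apply Finset.card_le_card_of_injOn φ
    · intro t ht
      rw [Finset.mem_coe, Finset.mem_inter, Finset.mem_Icc] at ht
      have hi := hTIcc ht.1
      rw [Finset.mem_coe, Finset.mem_inter, Finset.mem_Icc]
      have h1 := hφS t hi
      have h2 := hφle' t hi
      have h3 : 1 ≤ φ t := by
        have := hφS t hi
        have := hmin ▸ this
        unfold minsetOf at this
        rw [Finset.mem_filter, Finset.mem_Icc] at this
        exact this.1.1
      exact ⟨h1, h3, le_trans h2 ht.2.2⟩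
    · intro t₁ h1 t₂ h2 heq
      rw [Finset.coe_inter] at h1 h2
      exact hinj t₁ h1.1 t₂ h2.1 heq
  · intro i hi1 hi2 hiS
    have hiIcc : i ∈ Finset.Icc 1 n := Finset.mem_Icc.2 ⟨hi1, hi2⟩
    set m := φ i with hm
    have hmS : m ∈ S := hφS i hiIcc
    have hmlei : m ≤ i := hφle' i hiIcc
    have hmne : m ≠ i := by
      intro h
      apply hiS
      rw [← hmin]
      unfold minsetOf
      rw [Finset.mem_filter]
      refine ⟨hiIcc, P.part i, P.part_mem.2 hiIcc, P.mem_part hiIcc, ?_⟩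
      intro j hj
      have h2 := hφle i hiIcc j hj
      omega
    have hm1 : 1 ≤ m := by
      have := hmin ▸ hmS
      unfold minsetOf at this
      rw [Finset.mem_filter, Finset.mem_Icc] at this
      exact this.1.1
    have hmmem : m ∈ S ∩ Finset.Icc 1 (i-1) := by
      rw [Finset.mem_inter, Finset.mem_Icc]
      exact ⟨hmS, hm1, by omega⟩
    have hcard2 : (T ∩ Finset.Icc 1 (i-1)).card ≤ ((S ∩ Finset.Icc 1 (i-1)).erase m).card := by
      apply Finset.card_le_card_of_injOn φ
      · intro t ht
        rw [Finset.mem_coe, Finset.mem_inter, Finset.mem_Icc] at ht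
        have hti := hTIcc ht.1
        rw [Finset.mem_coe, Finset.mem_erase, Finset.mem_inter, Finset.mem_Icc]
        have h1 := hφS t hti
        have h2 := hφle' t hti
        have h3 : 1 ≤ φ t := by
          have := hmin ▸ hφS t hti
          unfold minsetOf at this
          rw [Finset.mem_filter, Finset.mem_Icc] at this
          exact this.1.1
        refine ⟨?_, h1, h3, le_trans h2 ht.2.2⟩
        intro heq
        have hx2 : φ t ∈ P.part i := by rw [heq, hm]; exact hφmem i hiIcc
        have hpp : P.part t = P.part i :=
          P.eq_of_mem_parts (P.part_mem.2 hti) (P.part_mem.2 hiIcc) (hφmem t hti) hx2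
        have : i ≤ t := hTmax t ht.1 i (hpp ▸ P.mem_part hiIcc)
        omega
      · intro t₁ h1 t₂ h2 heq
        rw [Finset.coe_inter] at h1 h2
        exact hinj t₁ h1.1 t₂ h2.1 heq
    have hce : ((S ∩ Finset.Icc 1 (i-1)).erase m).card
        = (S ∩ Finset.Icc 1 (i-1)).card - 1 := Finset.card_erase_of_mem hmmem
    have hpos : 1 ≤ (S ∩ Finset.Icc 1 (i-1)).card := Finset.card_pos.2 ⟨m, hmmem⟩
    unfold tc sc
    omega

end MZ

theorem pnST_nonempty_iff_motzkin (n : ℕ) (S T : Finset ℕ)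
    (hS : S ⊆ Finset.Icc 1 n) (hT : T ⊆ Finset.Icc 1 n) (hcard : S.card = T.card) :
    (pnST n S T).Nonempty ↔ ∀ k ≤ 2 * n, 0 ≤ pathHt S T k := by
  constructor
  · rintro ⟨P, hP⟩
    simp only [pnST, Finset.mem_filter, Finset.mem_univ, true_and] at hP
    obtain ⟨hmin, hmax⟩ := hP
    obtain ⟨hle, hlt⟩ := MZ.forward S T n P hmin hmax
    intro k hk
    rcases Nat.even_or_odd k with ⟨i, rfl⟩ | ⟨i, rfl⟩
    · rw [show i + i = 2 * i from by omega, MZ.pathHt_even]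
      have := hle i
      unfold MZ.sc MZ.tc at this ⊢
      omega
    · rw [MZ.pathHt_odd]
      by_cases hs : i + 1 ∈ S
      · have := hle i
        simp only [hs, if_true]
        unfold MZ.sc MZ.tc at this ⊢
        omega
      · have h1 : 1 ≤ i + 1 := by omega
        have h2 : i + 1 ≤ n := by omega
        have hx := hlt (i+1) h1 h2 hs
        simp only [Nat.add_sub_cancel] at hx
        simp only [hs, if_false]
        unfold MZ.sc MZ.tc at hx ⊢
        omega
  · intro hpath
    have Hodd : ∀ i, 1 ≤ i → i ≤ n → i ∉ S → MZ.tc T (i-1) < MZ.sc S (i-1) := by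
      intro i h1 h2 hs
      have hk : 2 * (i-1) + 1 ≤ 2 * n := by omega
      have hx := hpath _ hk
      rw [MZ.pathHt_odd] at hx
      rw [show i - 1 + 1 = i from by omega] at hx
      simp only [hs, if_false] at hx
      unfold MZ.sc MZ.tc at hx ⊢
      omega
    obtain ⟨P, hmin, hmax⟩ := MZ.construct S T n hS hT hcard Hodd
    refine ⟨P, ?_⟩
    simp only [pnST, Finset.mem_filter, Finset.mem_univ, true_and]
    exact ⟨hmin, hmax⟩
end

section
/- Fix S, T ⊆ [n] with |S| = |T| and P_n(S,T) nonempty. For i ∉ T let h(i) = |T ∩ {i+1,…,n}| − |S ∩ {i+1,…,n}|. Then the multiset {h(i) : i ∈ [n]\T} equals the multiset of heights of the up-steps of the lattice path L(S,T), where an up-step from (x−1, y−1) to (x, y) has height y. -/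
open Finset
open scoped Classical

lemma sup_id_mem {B : Finset ℕ} (h : B.Nonempty) : B.sup id ∈ B := by
  have := B.max'_mem h
  rwa [Finset.max'_eq_sup', Finset.sup'_eq_sup] at this

lemma key_ineq (n : ℕ) (S T : Finset ℕ) (hne : (pnST n S T).Nonempty) (a : ℕ) :
    (S ∩ Finset.Icc a n).card ≤ (T ∩ Finset.Icc a n).card := by
  obtain ⟨P, hP⟩ := hne
  simp only [pnST, Finset.mem_filter] at hP
  obtain ⟨-, hSm, hTm⟩ := hP
  apply Finset.card_le_card_of_injOn (fun s => (P.part s).sup id)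
  · intro s hs
    obtain ⟨hsS, hsI⟩ := Finset.mem_inter.1 hs
    have hsIcc : s ∈ Finset.Icc 1 n := by rw [← hSm] at hsS; exact (Finset.mem_filter.1 hsS).1
    have hpm := P.part_mem.2 hsIcc
    have hpne : (P.part s).Nonempty := ⟨s, P.mem_part hsIcc⟩
    have hmem : (P.part s).sup id ∈ P.part s := sup_id_mem hpne
    have hub : ∀ j ∈ P.part s, j ≤ (P.part s).sup id := fun j hj => Finset.le_sup (f := id) hj
    have hIcc : (P.part s).sup id ∈ Finset.Icc 1 n := P.le hpm hmem
    rw [Finset.mem_coe, Finset.mem_inter]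
    constructor
    · rw [← hTm, maxsetOf, Finset.mem_filter]
      exact ⟨hIcc, P.part s, hpm, hmem, hub⟩
    · have h1 := hub s (P.mem_part hsIcc)
      simp only [Finset.mem_Icc] at hsI hIcc ⊢
      omega
  · intro s₁ h₁ s₂ h₂ heq
    have hmin : ∀ s ∈ S ∩ Finset.Icc a n, s ∈ Finset.Icc 1 n ∧ ∀ j ∈ P.part s, s ≤ j := by
      intro s hs
      have hsS := (Finset.mem_inter.1 hs).1
      rw [← hSm] at hsS
      obtain ⟨hsIcc, B, hB, hsB, hmin⟩ := Finset.mem_filter.1 hsS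
      have : P.part s = B := P.part_eq_of_mem hB hsB
      exact ⟨hsIcc, by rw [this]; exact hmin⟩
    obtain ⟨hI₁, hm₁⟩ := hmin s₁ h₁
    obtain ⟨hI₂, hm₂⟩ := hmin s₂ h₂
    have hne₁ : (P.part s₁).Nonempty := ⟨s₁, P.mem_part hI₁⟩
    have hne₂ : (P.part s₂).Nonempty := ⟨s₂, P.mem_part hI₂⟩
    have hmem₁ : (P.part s₁).sup id ∈ P.part s₁ := sup_id_mem hne₁
    have hmem₂ : (P.part s₂).sup id ∈ P.part s₂ := sup_id_mem hne₂
    have hparts : P.part s₁ = P.part s₂ := by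
      have heq' : (P.part s₁).sup id = (P.part s₂).sup id := heq
      apply P.eq_of_mem_parts (P.part_mem.2 hI₁) (P.part_mem.2 hI₂) hmem₁
      rw [heq']; exact hmem₂
    have h12 : s₁ ≤ s₂ := hm₁ s₂ (by rw [hparts]; exact P.mem_part hI₂)
    have h21 : s₂ ≤ s₁ := hm₂ s₁ (by rw [← hparts]; exact P.mem_part hI₁)
    omega

lemma card_split (n i : ℕ) (X : Finset ℕ) (hX : X ⊆ Finset.Icc 1 n) :
    (X ∩ Finset.Icc 1 i).card + (X ∩ Finset.Icc (i+1) n).card = X.card := by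
  rw [← Finset.card_union_of_disjoint]
  · congr 1
    ext x
    simp only [Finset.mem_union, Finset.mem_inter, Finset.mem_Icc]
    constructor
    · tauto
    · intro hx
      have := Finset.mem_Icc.1 (hX hx)
      by_cases hxi : x ≤ i
      · exact Or.inl ⟨hx, by omega⟩
      · exact Or.inr ⟨hx, by omega⟩
  · rw [Finset.disjoint_left]
    intro x hx1 hx2
    simp only [Finset.mem_inter, Finset.mem_Icc] at hx1 hx2
    omega

lemma pathHt_even (S T : Finset ℕ) (i : ℕ) :
    pathHt S T (2*i) = ((S ∩ Finset.Icc 1 i).card : ℤ) - ((T ∩ Finset.Icc 1 i).card : ℤ) := by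
  induction i with
  | zero => simp [pathHt]
  | succ i ih =>
    have h2 : 2 * (i+1) = (2*i+1) + 1 := by ring
    have hd1 : stepDelta S T (2*i+1) = if i+1 ∈ S then 0 else -1 := by
      unfold stepDelta
      rw [if_pos (by omega)]
      simp only [show (2*i+1+1)/2 = i+1 from by omega]
    have hd2 : stepDelta S T (2*i+1+1) = if i+1 ∈ T then 0 else 1 := by
      unfold stepDelta
      rw [if_neg (by omega)]
      simp only [show (2*i+1+1)/2 = i+1 from by omega]
    have hI : Finset.Icc 1 (i+1) = insert (i+1) (Finset.Icc 1 i) := by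
      ext x; simp only [Finset.mem_Icc, Finset.mem_insert]; omega
    have hnm : ∀ X : Finset ℕ, (i+1) ∉ X ∩ Finset.Icc 1 i := by
      intro X h
      simp only [Finset.mem_inter, Finset.mem_Icc] at h
      omega
    have hcS : ((S ∩ Finset.Icc 1 (i+1)).card : ℤ)
        = ((S ∩ Finset.Icc 1 i).card : ℤ) + (if i+1 ∈ S then 1 else 0) := by
      rw [hI]
      by_cases h : i+1 ∈ S
      · rw [Finset.inter_insert_of_mem h, Finset.card_insert_of_notMem (hnm S)]
        simp [h]
      · rw [Finset.inter_insert_of_notMem h]; simp [h]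
    have hcT : ((T ∩ Finset.Icc 1 (i+1)).card : ℤ)
        = ((T ∩ Finset.Icc 1 i).card : ℤ) + (if i+1 ∈ T then 1 else 0) := by
      rw [hI]
      by_cases h : i+1 ∈ T
      · rw [Finset.inter_insert_of_mem h, Finset.card_insert_of_notMem (hnm T)]
        simp [h]
      · rw [Finset.inter_insert_of_notMem h]; simp [h]
    rw [hcS, hcT]
    show (∑ j ∈ Finset.Icc 1 (2*(i+1)), stepDelta S T j) = _
    rw [h2, Finset.sum_Icc_succ_top (by omega), Finset.sum_Icc_succ_top (by omega)]
    have : (∑ j ∈ Finset.Icc 1 (2*i), stepDelta S T j) = pathHt S T (2*i) := rfl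
    rw [this, ih, hd1, hd2]
    split_ifs <;> ring

theorem h_multiset_eq_upstep_heights (n : ℕ) (S T : Finset ℕ)
    (hS : S ⊆ Finset.Icc 1 n) (hT : T ⊆ Finset.Icc 1 n) (hcard : S.card = T.card)
    (hne : (pnST n S T).Nonempty) :
    (Finset.Icc 1 n \ T).val.map (fun i => (hST n S T i : ℤ)) =
      ((Finset.Icc 1 (2 * n)).filter (fun k => stepDelta S T k = 1)).val.map
        (fun k => pathHt S T k) := by
  have einj : Function.Injective (fun i : ℕ => 2 * i) := fun a b h => by have h2 : 2*a = 2*b := h; omega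
  have hset : (Finset.Icc 1 (2*n)).filter (fun k => stepDelta S T k = 1)
      = (Finset.Icc 1 n \ T).map ⟨fun i => 2*i, einj⟩ := by
    ext k
    simp only [Finset.mem_filter, Finset.mem_map, Finset.mem_sdiff, Finset.mem_Icc,
      Function.Embedding.coeFn_mk]
    constructor
    · rintro ⟨hk, hd⟩
      unfold stepDelta at hd
      by_cases h2 : k % 2 = 1
      · rw [if_pos h2] at hd; split_ifs at hd <;> omega
      · rw [if_neg h2] at hd
        split_ifs at hd with h3
        · omega
        · exact ⟨k/2, ⟨⟨by omega, by omega⟩, h3⟩, by omega⟩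
    · rintro ⟨i, ⟨⟨h1, h2⟩, hiT⟩, rfl⟩
      show (1 ≤ 2*i ∧ 2*i ≤ 2*n) ∧ stepDelta S T (2*i) = 1
      refine ⟨⟨by omega, by omega⟩, ?_⟩
      unfold stepDelta
      rw [if_neg (by omega)]
      simp only [show (2*i)/2 = i from by omega]
      rw [if_neg hiT]
  rw [hset, Finset.map_val, Multiset.map_map]
  apply Multiset.map_congr rfl
  intro i hi
  have hi' := Finset.mem_sdiff.1 (Finset.mem_val.mp hi)
  obtain ⟨hiI, hiT⟩ := hi'
  obtain ⟨h1, h2⟩ := Finset.mem_Icc.1 hiI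
  have hle := key_ineq n S T hne (i+1)
  have hsplS := card_split n i S hS
  have hsplT := card_split n i T hT
  show (↑(hST n S T i) : ℤ) = pathHt S T (2*i)
  rw [pathHt_even, hST, Nat.cast_sub hle]
  push_cast
  omega
end

section
/- Fix S, T ⊆ [n] with |S| = |T|. Then the cardinality of P_n(S,T) equals ∏_{i ∉ T} h(i), where h(i) = |T ∩ {i+1,…,n}| − |S ∩ {i+1,…,n}|. -/
open Finset
open scoped Classical

namespace PnSTProof

noncomputable def graphs (D R : Finset ℕ) : Finset (Finset (ℕ × ℕ)) :=
  (D ×ˢ R).powerset.filter (fun A => A.image Prod.fst = D ∧ A.image Prod.snd = R ∧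
    A.card = D.card ∧ ∀ p ∈ A, p.1 < p.2)

lemma mem_graphs {D R : Finset ℕ} {A : Finset (ℕ × ℕ)} :
    A ∈ graphs D R ↔ A.image Prod.fst = D ∧ A.image Prod.snd = R ∧
      A.card = D.card ∧ ∀ p ∈ A, p.1 < p.2 := by
  unfold graphs
  rw [mem_filter, mem_powerset]
  constructor
  · tauto
  · rintro ⟨h1, h2, h3, h4⟩
    refine ⟨?_, h1, h2, h3, h4⟩
    intro p hp
    rw [mem_product]
    exact ⟨h1 ▸ mem_image_of_mem _ hp, h2 ▸ mem_image_of_mem _ hp⟩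

lemma injOn_fst {D R : Finset ℕ} {A : Finset (ℕ × ℕ)} (h : A ∈ graphs D R) :
    Set.InjOn Prod.fst (A : Set (ℕ × ℕ)) := by
  rw [mem_graphs] at h
  exact Finset.card_image_iff.mp (by rw [h.1, ← h.2.2.1])

lemma injOn_snd {D R : Finset ℕ} {A : Finset (ℕ × ℕ)} (h : A ∈ graphs D R)
    (hRD : R.card = D.card) : Set.InjOn Prod.snd (A : Set (ℕ × ℕ)) := by
  rw [mem_graphs] at h
  exact Finset.card_image_iff.mp (by rw [h.2.1, hRD, ← h.2.2.1])

lemma graphs_card (D : Finset ℕ) : ∀ R : Finset ℕ, R.card = D.card →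
    (graphs D R).card = ∏ i ∈ D, ((R.filter (i < ·)).card - (D.filter (i < ·)).card) := by
  induction D using Finset.strongInductionOn with
  | _ D ih =>
    intro R hcard
    rcases D.eq_empty_or_nonempty with rfl | hne
    · have hR : R = ∅ := card_eq_zero.mp (by simpa using hcard)
      subst hR
      rw [prod_empty]
      have : graphs (∅ : Finset ℕ) (∅ : Finset ℕ) = {∅} := by
        ext A
        rw [mem_graphs, mem_singleton]
        constructor
        · rintro ⟨-, -, h3, -⟩
          exact card_eq_zero.mp (by simpa using h3)
        · rintro rfl; simp
      rw [this, card_singleton]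
    · set m := D.max' hne with hm
      have hmD : m ∈ D := D.max'_mem hne
      have key : graphs D R = (R.filter (fun r => m < r)).biUnion
          (fun r => (graphs (D.erase m) (R.erase r)).image (insert (m, r))) := by
        ext A
        rw [mem_graphs, mem_biUnion]
        constructor
        · rintro hA
          obtain ⟨h1, h2, h3, h4⟩ := hA
          have hAg : A ∈ graphs D R := mem_graphs.mpr ⟨h1, h2, h3, h4⟩
          have : m ∈ A.image Prod.fst := h1 ▸ hmD
          obtain ⟨p, hpA, hpm⟩ := mem_image.mp this
          obtain ⟨a, r⟩ := p
          dsimp only at hpm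
          subst hpm
          refine ⟨r, ?_, ?_⟩
          · exact mem_filter.mpr ⟨h2 ▸ mem_image_of_mem _ hpA, h4 _ hpA⟩
          rw [mem_image]
          refine ⟨A.erase (m, r), ?_, insert_erase hpA⟩
          rw [mem_graphs]
          have hinjf := injOn_fst hAg
          have hinjs := injOn_snd hAg hcard
          refine ⟨?_, ?_, ?_, fun p hp => h4 p (mem_of_mem_erase hp)⟩
          · rw [← h1]
            ext x
            simp only [mem_image, mem_erase]
            constructor
            · rintro ⟨p, ⟨hpne, hpA'⟩, rfl⟩
              refine ⟨fun hx => hpne ?_, ⟨p, hpA', rfl⟩⟩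
              exact hinjf hpA' hpA hx
            · rintro ⟨hxm, p, hpA', rfl⟩
              exact ⟨p, ⟨fun h => hxm (by rw [h]), hpA'⟩, rfl⟩
          · rw [← h2]
            ext x
            simp only [mem_image, mem_erase]
            constructor
            · rintro ⟨p, ⟨hpne, hpA'⟩, rfl⟩
              refine ⟨fun hx => hpne ?_, ⟨p, hpA', rfl⟩⟩
              exact hinjs hpA' hpA hx
            · rintro ⟨hxm, p, hpA', rfl⟩
              exact ⟨p, ⟨fun h => hxm (by rw [h]), hpA'⟩, rfl⟩
          · rw [card_erase_of_mem hpA, h3, card_erase_of_mem hmD]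
        · rintro ⟨r, hr, hAim⟩
          rw [mem_image] at hAim
          obtain ⟨A', hA', rfl⟩ := hAim
          rw [mem_filter] at hr
          rw [mem_graphs] at hA'
          obtain ⟨h1, h2, h3, h4⟩ := hA'
          have hmr : (m, r) ∉ A' := fun h => by
            have : m ∈ A'.image Prod.fst := mem_image_of_mem _ h
            rw [h1] at this
            exact (mem_erase.mp this).1 rfl
          refine ⟨?_, ?_, ?_, ?_⟩
          · rw [image_insert, h1, insert_erase hmD]
          · rw [image_insert, h2, insert_erase hr.1]
          · rw [card_insert_of_notMem hmr, h3, card_erase_of_mem hmD,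
              Nat.sub_add_cancel (card_pos.mpr ⟨m, hmD⟩)]
          · intro p hp
            rcases mem_insert.mp hp with rfl | hp'
            · exact hr.2
            · exact h4 p hp'
      rw [key, card_biUnion]
      · have hsub : D.erase m ⊂ D := erase_ssubset hmD
        have hprod : ∀ r ∈ R.filter (fun r => m < r),
            ((graphs (D.erase m) (R.erase r)).image (insert (m, r))).card
              = ∏ i ∈ D.erase m, ((R.filter (i < ·)).card - (D.filter (i < ·)).card) := by
          intro r hr
          rw [mem_filter] at hr
          have hinj : Set.InjOn (insert ((m, r) : ℕ × ℕ)) ((graphs (D.erase m) (R.erase r) : Finset (Finset (ℕ×ℕ))) : Set (Finset (ℕ×ℕ))) := by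
            intro A₁ hA₁ A₂ hA₂ h
            have hmr : ∀ A ∈ graphs (D.erase m) (R.erase r), (m, r) ∉ A := by
              intro A hA hmem
              rw [mem_graphs] at hA
              have : m ∈ A.image Prod.fst := mem_image_of_mem _ hmem
              rw [hA.1] at this
              exact (mem_erase.mp this).1 rfl
            have := congrArg (fun s => Finset.erase s (m, r)) h
            simpa [erase_insert (hmr A₁ hA₁), erase_insert (hmr A₂ hA₂)] using this
          rw [card_image_of_injOn hinj]
          rw [ih (D.erase m) hsub (R.erase r)
            (by rw [card_erase_of_mem hr.1, card_erase_of_mem hmD, hcard])]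
          apply Finset.prod_congr rfl
          intro i hi
          rw [mem_erase] at hi
          have him : i < m := lt_of_le_of_ne (D.le_max' i hi.2) hi.1
          have hRf : ((R.erase r).filter (i < ·)) = (R.filter (i < ·)).erase r := by
            ext x; simp only [mem_filter, mem_erase]; tauto
          have hDf : ((D.erase m).filter (i < ·)) = (D.filter (i < ·)).erase m := by
            ext x; simp only [mem_filter, mem_erase]; tauto
          have hc1 : ((R.filter (fun x => i < x)).erase r).card
              = (R.filter (fun x => i < x)).card - 1 :=
            card_erase_of_mem (mem_filter.mpr ⟨hr.1, lt_trans him hr.2⟩)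
          have hc2 : ((D.filter (fun x => i < x)).erase m).card
              = (D.filter (fun x => i < x)).card - 1 :=
            card_erase_of_mem (mem_filter.mpr ⟨hmD, him⟩)
          have h1 : 0 < (R.filter (fun x => i < x)).card :=
            card_pos.mpr ⟨r, mem_filter.mpr ⟨hr.1, lt_trans him hr.2⟩⟩
          have h2 : 0 < (D.filter (fun x => i < x)).card :=
            card_pos.mpr ⟨m, mem_filter.mpr ⟨hmD, him⟩⟩
          rw [hRf, hDf, hc1, hc2]
          omega
        rw [Finset.sum_congr rfl hprod, Finset.sum_const, smul_eq_mul,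
          ← Finset.mul_prod_erase D _ hmD]
        congr 1
        have : D.filter (m < ·) = ∅ := by
          apply filter_eq_empty_iff.mpr
          intro x hx
          exact not_lt.mpr (D.le_max' x hx)
        rw [this, card_empty, Nat.sub_zero]
      · intro r₁ h₁ r₂ h₂ hne12
        apply disjoint_left.mpr
        intro A hA₁ hA₂
        simp only [mem_image] at hA₁ hA₂
        obtain ⟨A₁, hA₁g, rfl⟩ := hA₁
        obtain ⟨A₂, hA₂g, hEq⟩ := hA₂
        rw [mem_graphs] at hA₁g hA₂g
        have : (m, r₂) ∈ insert (m, r₁) A₁ := by rw [← hEq]; exact mem_insert_self _ _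
        rcases mem_insert.mp this with h | h
        · exact (hne12 (congrArg Prod.snd h).symm).elim
        · have : m ∈ A₁.image Prod.fst := mem_image_of_mem _ h
          rw [hA₁g.1] at this
          exact (mem_erase.mp this).1 rfl


noncomputable def predSet (A : Finset (ℕ × ℕ)) (i : ℕ) : Finset (ℕ × ℕ) :=
  A.filter (fun p => p.2 = i ∧ p.1 < i)

noncomputable def predOf (A : Finset (ℕ × ℕ)) (i : ℕ) (h : (predSet A i).Nonempty) : ℕ :=
  ((predSet A i).image Prod.fst).min' (h.image _)

lemma predOf_spec {A : Finset (ℕ × ℕ)} {i : ℕ} (h : (predSet A i).Nonempty) :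
    (predOf A i h, i) ∈ A ∧ predOf A i h < i := by
  have hm := ((predSet A i).image Prod.fst).min'_mem (h.image _)
  obtain ⟨p, hp, hp1⟩ := mem_image.mp hm
  rw [predSet, mem_filter] at hp
  have hpe : p = (predOf A i h, i) := by
    have : p.1 = predOf A i h := hp1
    rw [← this, ← hp.2.1]
  constructor
  · rw [← hpe]; exact hp.1
  · have : p.1 = predOf A i h := hp1
    rw [← this]; exact hp.2.2

noncomputable def rootAux (A : Finset (ℕ × ℕ)) : ℕ → ℕ → ℕ
  | 0, i => i
  | (k+1), i => if h : (predSet A i).Nonempty then rootAux A k (predOf A i h) else i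

noncomputable def rootA (A : Finset (ℕ × ℕ)) (i : ℕ) : ℕ := rootAux A (i+1) i

lemma rootAux_congr {A : Finset (ℕ × ℕ)} :
    ∀ k k' i, i < k → i < k' → rootAux A k i = rootAux A k' i := by
  intro k
  induction k with
  | zero => intro k' i h; omega
  | succ k ihk =>
    intro k' i h h'
    match k', h' with
    | (k'+1), h' =>
      show (if h : (predSet A i).Nonempty then rootAux A k (predOf A i h) else i)
        = (if h : (predSet A i).Nonempty then rootAux A k' (predOf A i h) else i)
      split
      · next hne =>
        have hlt := (predOf_spec hne).2
        exact ihk k' _ (by omega) (by omega)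
      · rfl

lemma rootA_spec (A : Finset (ℕ × ℕ)) (i : ℕ) :
    rootA A i = if h : (predSet A i).Nonempty then rootA A (predOf A i h) else i := by
  show (if h : (predSet A i).Nonempty then rootAux A i (predOf A i h) else i) = _
  split
  · next hne =>
    have hlt := (predOf_spec hne).2
    exact rootAux_congr i _ _ (by omega) (by omega)
  · rfl

lemma rootA_le (A : Finset (ℕ × ℕ)) : ∀ i, rootA A i ≤ i := by
  intro i
  induction i using Nat.strong_induction_on with
  | _ i ih =>
    rw [rootA_spec]
    split
    · next hne =>
      have hlt := (predOf_spec hne).2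
      exact le_trans (ih _ hlt) (le_of_lt hlt)
    · exact le_refl i

lemma predSet_rootA (A : Finset (ℕ × ℕ)) : ∀ i, ¬ (predSet A (rootA A i)).Nonempty := by
  intro i
  induction i using Nat.strong_induction_on with
  | _ i ih =>
    rw [rootA_spec]
    split
    · next hne => exact ih _ (predOf_spec hne).2
    · next hne => exact hne

lemma rootA_rootA (A : Finset (ℕ × ℕ)) (i : ℕ) : rootA A (rootA A i) = rootA A i := by
  rw [rootA_spec, dif_neg (predSet_rootA A i)]

section Valid

variable {A : Finset (ℕ × ℕ)}
variable (hinjf : Set.InjOn Prod.fst (A : Set (ℕ × ℕ)))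
variable (hinjs : Set.InjOn Prod.snd (A : Set (ℕ × ℕ)))
variable (horder : ∀ p ∈ A, p.1 < p.2)

include hinjs horder in
lemma rootA_arc {a b : ℕ} (hab : (a, b) ∈ A) : rootA A b = rootA A a := by
  have hps : predSet A b = {(a, b)} := by
    ext q
    simp only [predSet, mem_filter, mem_singleton]
    constructor
    · rintro ⟨hq, hq2, -⟩
      exact hinjs hq hab (by simpa using hq2)
    · rintro rfl
      exact ⟨hab, rfl, horder _ hab⟩
  have hne : (predSet A b).Nonempty := by rw [hps]; exact singleton_nonempty _
  rw [rootA_spec, dif_pos hne]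
  have hm := (predOf_spec hne).1
  have : predOf A b hne = a := by
    have := hinjs hm hab (by rfl)
    exact congrArg Prod.fst this
  rw [this]

include horder in
lemma rtg_le {x y : ℕ} (h : Relation.ReflTransGen (fun a b => (a, b) ∈ A) x y) : x ≤ y := by
  induction h with
  | refl => exact le_refl _
  | tail _ hbc ih => exact le_trans ih (le_of_lt (horder _ hbc))

include hinjs horder in
lemma rootA_of_rtg {x y : ℕ} (h : Relation.ReflTransGen (fun a b => (a, b) ∈ A) x y) :
    rootA A x = rootA A y := by
  induction h with
  | refl => rfl
  | tail _ hbc ih => exact ih.trans (rootA_arc hinjs horder hbc).symm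

lemma rtg_rootA : ∀ i, Relation.ReflTransGen (fun a b => (a, b) ∈ A) (rootA A i) i := by
  intro i
  induction i using Nat.strong_induction_on with
  | _ i ih =>
    rcases eq_or_ne (rootA A i) i with h | h
    · rw [h]
    · have hne : (predSet A i).Nonempty := by
        by_contra hne
        exact h (by rw [rootA_spec, dif_neg hne])
      have hroot : rootA A i = rootA A (predOf A i hne) := by rw [rootA_spec, dif_pos hne]
      rw [hroot]
      exact (ih _ (predOf_spec hne).2).tail (predOf_spec hne).1

include hinjf hinjs horder in
lemma chain_conn : ∀ N i j, i + j ≤ N → rootA A i = rootA A j → i ≤ j →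
    Relation.ReflTransGen (fun a b => (a, b) ∈ A) i j := by
  intro N
  induction N with
  | zero =>
    intro i j hN _ _
    have : i = j := by omega
    rw [this]
  | succ N ihN =>
    intro i j hN hroot hij
    rcases eq_or_lt_of_le hij with rfl | hlt
    · exact Relation.ReflTransGen.refl
    · have hne : (predSet A j).Nonempty := by
        by_contra hpe
        have hj : rootA A j = j := by rw [rootA_spec, dif_neg hpe]
        have := rootA_le A i
        omega
      set c := predOf A j hne with hc
      have hcj : (c, j) ∈ A := (predOf_spec hne).1
      have hclt : c < j := (predOf_spec hne).2
      have hrootc : rootA A j = rootA A c := rootA_arc hinjs horder hcj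
      rcases le_total i c with hic | hci
      · have hrtg : Relation.ReflTransGen (fun a b => (a, b) ∈ A) i c :=
          ihN i c (by omega) (hroot.trans hrootc) hic
        exact hrtg.tail hcj
      · have hrtg : Relation.ReflTransGen (fun a b => (a, b) ∈ A) c i :=
          ihN c i (by omega) (hrootc.symm.trans hroot.symm) hci
        rcases hrtg.cases_head with heq | ⟨d, hcd, hdi⟩
        · rw [← heq]
          exact Relation.ReflTransGen.single hcj
        · have hdj : d = j := by
            have : ((c, d) : ℕ × ℕ) = (c, j) := hinjf hcd hcj rfl
            exact congrArg Prod.snd this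
          rw [hdj] at hdi
          have := rtg_le horder hdi
          omega

end Valid

noncomputable def fiberPartition (s : Finset ℕ) (f : ℕ → ℕ) : Finpartition s where
  parts := s.image (fun i => s.filter (fun j => f j = f i))
  supIndep := by
    rw [Finset.supIndep_iff_pairwiseDisjoint]
    rintro B hB C hC hne
    simp only [coe_image, Set.mem_image, mem_coe] at hB hC
    obtain ⟨i, hi, rfl⟩ := hB
    obtain ⟨j, hj, rfl⟩ := hC
    simp only [Function.onFun, id_eq]
    rw [Finset.disjoint_left]
    intro x hx hx'
    rw [mem_filter] at hx hx'
    apply hne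
    have hij : f i = f j := by rw [← hx.2, hx'.2]
    rw [hij]
  sup_parts := by
    apply le_antisymm
    · apply Finset.sup_le
      intro B hB
      obtain ⟨i, -, rfl⟩ := mem_image.mp hB
      exact filter_subset _ _
    · intro a ha
      rw [Finset.mem_sup]
      exact ⟨_, mem_image_of_mem _ ha, mem_filter.mpr ⟨ha, rfl⟩⟩
  bot_notMem := by
    intro h
    obtain ⟨i, hi, hfe⟩ := mem_image.mp h
    have : i ∈ s.filter (fun j => f j = f i) := mem_filter.mpr ⟨hi, rfl⟩
    rw [hfe] at this
    simpa using this


lemma mem_arcsOf {n : ℕ} {P : Finpartition (Finset.Icc 1 n)} {a b : ℕ} :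
    (a, b) ∈ arcsOf P ↔ a ∈ Finset.Icc 1 n ∧ b ∈ Finset.Icc 1 n ∧ a < b ∧
      ∃ B ∈ P.parts, a ∈ B ∧ b ∈ B ∧ ∀ k ∈ B, a < k → k < b → False := by
  unfold arcsOf
  rw [mem_filter, mem_product]
  tauto

lemma exists_arc_succ {n : ℕ} {P : Finpartition (Finset.Icc 1 n)} {B : Finset ℕ}
    (hB : B ∈ P.parts) {a j : ℕ} (ha : a ∈ B) (hj : j ∈ B) (haj : a < j) :
    ∃ b, (a, b) ∈ arcsOf P ∧ b ≤ j := by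
  have hCne : (B.filter (fun k => a < k)).Nonempty := ⟨j, mem_filter.mpr ⟨hj, haj⟩⟩
  refine ⟨(B.filter (fun k => a < k)).min' hCne, ?_, min'_le _ j (mem_filter.mpr ⟨hj, haj⟩)⟩
  have hbm := mem_filter.mp ((B.filter (fun k => a < k)).min'_mem hCne)
  rw [mem_arcsOf]
  refine ⟨P.le hB ha, P.le hB hbm.1, hbm.2, B, hB, ha, hbm.1, ?_⟩
  intro k hk hik hkb
  exact absurd (Finset.min'_le _ k (mem_filter.mpr ⟨hk, hik⟩)) (not_le.mpr hkb)

lemma exists_arc_pred {n : ℕ} {P : Finpartition (Finset.Icc 1 n)} {B : Finset ℕ}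
    (hB : B ∈ P.parts) {b j : ℕ} (hb : b ∈ B) (hj : j ∈ B) (hjb : j < b) :
    ∃ a, (a, b) ∈ arcsOf P := by
  have hCne : (B.filter (fun x => x < b)).Nonempty := ⟨j, mem_filter.mpr ⟨hj, hjb⟩⟩
  refine ⟨(B.filter (fun x => x < b)).max' hCne, ?_⟩
  have ham := mem_filter.mp ((B.filter (fun x => x < b)).max'_mem hCne)
  rw [mem_arcsOf]
  refine ⟨P.le hB ham.1, P.le hB hb, ham.2, B, hB, ham.1, hb, ?_⟩
  intro k hk hik hkb
  exact absurd (Finset.le_max' (B.filter (fun x => x < b)) k (mem_filter.mpr ⟨hk, hkb⟩))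
    (not_le.mpr hik)

lemma partition_conn {n : ℕ} {P : Finpartition (Finset.Icc 1 n)} :
    ∀ d B, B ∈ P.parts → ∀ i ∈ B, ∀ j ∈ B, i ≤ j → j - i ≤ d →
      Relation.ReflTransGen (fun a b => (a, b) ∈ arcsOf P) i j := by
  intro d
  induction d with
  | zero =>
    intro B hB i hi j hj hij hd
    have : i = j := by omega
    rw [this]
  | succ d ihd =>
    intro B hB i hi j hj hij hd
    rcases eq_or_lt_of_le hij with rfl | hlt
    · exact Relation.ReflTransGen.refl
    · obtain ⟨b, harc, hbj⟩ := exists_arc_succ hB hi hj hlt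
      obtain ⟨-, -, hib, B', hB', hiB', hbB', -⟩ := mem_arcsOf.mp harc
      have hBB' : B = B' := P.eq_of_mem_parts hB hB' hi hiB'
      exact Relation.ReflTransGen.head harc
        (ihd B hB b (hBB' ▸ hbB') j hj hbj (by omega))

lemma rtg_block {n : ℕ} {P : Finpartition (Finset.Icc 1 n)} {i j : ℕ}
    (h : Relation.ReflTransGen (fun a b => (a, b) ∈ arcsOf P) i j) :
    ∀ B ∈ P.parts, i ∈ B → j ∈ B := by
  induction h with
  | refl => intro B _ hi; exact hi
  | tail _ hbc ih =>
    intro B hB hi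
    obtain ⟨-, -, -, B', hB', hbB', hcB', -⟩ := mem_arcsOf.mp hbc
    have hbB := ih B hB hi
    have : B = B' := P.eq_of_mem_parts hB hB' hbB hbB'
    rw [this]
    exact hcB'

lemma finpartition_eq {s : Finset ℕ} {P Q : Finpartition s} (h : P.parts = Q.parts) : P = Q := by
  cases P; cases Q; simpa using h

lemma arcsOf_inj {n : ℕ} {P Q : Finpartition (Finset.Icc 1 n)}
    (h : arcsOf P = arcsOf Q) : P = Q := by
  have key : ∀ (P Q : Finpartition (Finset.Icc 1 n)), arcsOf P = arcsOf Q →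
      P.parts ⊆ Q.parts := by
    clear h P Q
    intro P Q h B hB
    obtain ⟨i, hi⟩ := P.nonempty_of_mem_parts hB
    have hiI : i ∈ Finset.Icc 1 n := P.le hB hi
    obtain ⟨B', hB', hiB'⟩ := Q.exists_mem hiI
    have hconn : ∀ (R S : Finpartition (Finset.Icc 1 n)), arcsOf R = arcsOf S →
        ∀ C ∈ R.parts, ∀ C' ∈ S.parts, ∀ x ∈ C, x ∈ C' → ∀ y ∈ C, y ∈ C' := by
      intro R S hRS C hC C' hC' x hxC hxC' y hyC
      rcases le_total x y with hxy | hyx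
      · have hrtg := partition_conn (P := R) (y - x) C hC x hxC y hyC hxy le_rfl
        have hrtg' : Relation.ReflTransGen (fun a b => (a, b) ∈ arcsOf S) x y := by
          rw [← hRS]; exact hrtg
        exact rtg_block hrtg' C' hC' hxC'
      · have hrtg := partition_conn (P := R) (x - y) C hC y hyC x hxC hyx le_rfl
        have hrtg' : Relation.ReflTransGen (fun a b => (a, b) ∈ arcsOf S) y x := by
          rw [← hRS]; exact hrtg
        obtain ⟨C'', hC'', hyC''⟩ := S.exists_mem (R.le hC hyC)
        have hxC'' : x ∈ C'' := rtg_block hrtg' C'' hC'' hyC''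
        have : C'' = C' := S.eq_of_mem_parts hC'' hC' hxC'' hxC'
        rw [← this]; exact hyC''
    have hBB' : B = B' := by
      apply Finset.Subset.antisymm
      · intro j hj
        exact hconn P Q h B hB B' hB' i hi hiB' j hj
      · intro j hj
        exact hconn Q P h.symm B' hB' B hB i hiB' hi j hj
    rw [hBB']
    exact hB'
  exact finpartition_eq (Finset.Subset.antisymm (key P Q h) (key Q P h.symm))

lemma arcsOf_injOn_fst {n : ℕ} {P : Finpartition (Finset.Icc 1 n)} :
    Set.InjOn Prod.fst ((arcsOf P : Finset (ℕ × ℕ)) : Set (ℕ × ℕ)) := by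
  have key : ∀ a b₁ b₂, (a, b₁) ∈ arcsOf P → (a, b₂) ∈ arcsOf P → b₁ < b₂ → False := by
    intro a b₁ b₂ h₁ h₂ hlt
    obtain ⟨-, -, hab₁, B₁, hB₁, haB₁, hbB₁, -⟩ := mem_arcsOf.mp h₁
    obtain ⟨-, -, hab₂, B₂, hB₂, haB₂, hbB₂, hbet⟩ := mem_arcsOf.mp h₂
    have hBB : B₁ = B₂ := P.eq_of_mem_parts hB₁ hB₂ haB₁ haB₂
    exact hbet b₁ (hBB ▸ hbB₁) hab₁ hlt
  intro p hp q hq hpq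
  simp only [mem_coe] at hp hq
  obtain ⟨p1, p2⟩ := p
  obtain ⟨q1, q2⟩ := q
  dsimp only at hpq ⊢
  subst hpq
  have : p2 = q2 := by
    rcases lt_trichotomy p2 q2 with h | h | h
    · exact absurd (key _ _ _ hp hq h) not_false
    · exact h
    · exact absurd (key _ _ _ hq hp h) not_false
  rw [this]

lemma arcsOf_mem_graphs {n : ℕ} {S T : Finset ℕ}
    (hS : S ⊆ Finset.Icc 1 n) (hT : T ⊆ Finset.Icc 1 n)
    {P : Finpartition (Finset.Icc 1 n)} (hmin : minsetOf P = S) (hmax : maxsetOf P = T) :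
    arcsOf P ∈ graphs (Finset.Icc 1 n \ T) (Finset.Icc 1 n \ S) := by
  rw [mem_graphs]
  have himfst : (arcsOf P).image Prod.fst = Finset.Icc 1 n \ T := by
    ext a
    rw [mem_image, mem_sdiff]
    constructor
    · rintro ⟨p, hp, rfl⟩
      obtain ⟨a, b⟩ := p
      obtain ⟨haI, hbI, hab, B, hB, haB, hbB, -⟩ := mem_arcsOf.mp hp
      refine ⟨haI, fun haT => ?_⟩
      rw [← hmax, maxsetOf, mem_filter] at haT
      obtain ⟨-, B', hB', haB', hmaxB'⟩ := haT
      have hBB : B = B' := P.eq_of_mem_parts hB hB' haB haB'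
      exact absurd (hmaxB' b (hBB ▸ hbB)) (not_le.mpr hab)
    · rintro ⟨haI, haT⟩
      obtain ⟨B, hB, haB⟩ := P.exists_mem haI
      have : ∃ j ∈ B, a < j := by
        by_contra hno
        push_neg at hno
        exact haT (hmax ▸ mem_filter.mpr ⟨haI, B, hB, haB, hno⟩)
      obtain ⟨j, hj, haj⟩ := this
      obtain ⟨b, harc, -⟩ := exists_arc_succ hB haB hj haj
      exact ⟨(a, b), harc, rfl⟩
  have himsnd : (arcsOf P).image Prod.snd = Finset.Icc 1 n \ S := by
    ext b
    rw [mem_image, mem_sdiff]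
    constructor
    · rintro ⟨p, hp, rfl⟩
      obtain ⟨a, b⟩ := p
      obtain ⟨haI, hbI, hab, B, hB, haB, hbB, -⟩ := mem_arcsOf.mp hp
      refine ⟨hbI, fun hbS => ?_⟩
      rw [← hmin, minsetOf, mem_filter] at hbS
      obtain ⟨-, B', hB', hbB', hminB'⟩ := hbS
      have hBB : B = B' := P.eq_of_mem_parts hB hB' hbB hbB'
      exact absurd (hminB' a (hBB ▸ haB)) (not_le.mpr hab)
    · rintro ⟨hbI, hbS⟩
      obtain ⟨B, hB, hbB⟩ := P.exists_mem hbI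
      have : ∃ j ∈ B, j < b := by
        by_contra hno
        push_neg at hno
        exact hbS (hmin ▸ mem_filter.mpr ⟨hbI, B, hB, hbB, hno⟩)
      obtain ⟨j, hj, hjb⟩ := this
      obtain ⟨a, harc⟩ := exists_arc_pred hB hbB hj hjb
      exact ⟨(a, b), harc, rfl⟩
  refine ⟨himfst, himsnd, ?_, ?_⟩
  · rw [← himfst, Finset.card_image_of_injOn arcsOf_injOn_fst]
  · intro p hp
    obtain ⟨a, b⟩ := p
    exact (mem_arcsOf.mp hp).2.2.1

lemma graphs_surj {n : ℕ} {S T : Finset ℕ}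
    (hS : S ⊆ Finset.Icc 1 n) (hT : T ⊆ Finset.Icc 1 n) (hcard : S.card = T.card)
    {A : Finset (ℕ × ℕ)} (hA : A ∈ graphs (Finset.Icc 1 n \ T) (Finset.Icc 1 n \ S)) :
    ∃ P : Finpartition (Finset.Icc 1 n), minsetOf P = S ∧ maxsetOf P = T ∧ arcsOf P = A := by
  have hRD : (Finset.Icc 1 n \ S).card = (Finset.Icc 1 n \ T).card := by
    rw [card_sdiff_of_subset hS, card_sdiff_of_subset hT, hcard]
  have hA' := mem_graphs.mp hA
  obtain ⟨h1, h2, h3, h4⟩ := hA'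
  have hinjf : Set.InjOn Prod.fst (A : Set (ℕ × ℕ)) := injOn_fst hA
  have hinjs : Set.InjOn Prod.snd (A : Set (ℕ × ℕ)) := injOn_snd hA hRD
  -- preds and succs characterization
  have hpredne : ∀ b, (predSet A b).Nonempty ↔ b ∈ Finset.Icc 1 n \ S := by
    intro b
    constructor
    · rintro ⟨p, hp⟩
      rw [predSet, mem_filter] at hp
      rw [← h2]
      exact mem_image.mpr ⟨p, hp.1, hp.2.1⟩
    · intro hb
      rw [← h2] at hb
      obtain ⟨p, hp, hp2⟩ := mem_image.mp hb
      exact ⟨p, mem_filter.mpr ⟨hp, hp2, hp2 ▸ h4 p hp⟩⟩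
  have hsuccne : ∀ a, (∃ b, (a, b) ∈ A) ↔ a ∈ Finset.Icc 1 n \ T := by
    intro a
    constructor
    · rintro ⟨b, hb⟩
      rw [← h1]
      exact mem_image.mpr ⟨(a, b), hb, rfl⟩
    · intro ha
      rw [← h1] at ha
      obtain ⟨p, hp, hp1⟩ := mem_image.mp ha
      exact ⟨p.2, by rw [← hp1]; exact hp⟩
  have hAmem : ∀ p ∈ A, p.1 ∈ Finset.Icc 1 n ∧ p.2 ∈ Finset.Icc 1 n := by
    intro p hp
    constructor
    · exact (mem_sdiff.mp (h1 ▸ mem_image_of_mem Prod.fst hp)).1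
    · exact (mem_sdiff.mp (h2 ▸ mem_image_of_mem Prod.snd hp)).1
  have hroot_mem : ∀ i, i ∈ Finset.Icc 1 n → rootA A i ∈ Finset.Icc 1 n := by
    intro i
    induction i using Nat.strong_induction_on with
    | _ i ih =>
      intro hi
      rw [rootA_spec]
      split
      · next hne =>
        exact ih _ (predOf_spec hne).2 (hAmem _ (predOf_spec hne).1).1
      · next => exact hi
  have hroot_self : ∀ i, i ∈ Finset.Icc 1 n → (rootA A i = i ↔ i ∈ S) := by
    intro i hi
    constructor
    · intro hri
      by_contra hiS
      have hne : (predSet A i).Nonempty := (hpredne i).mpr (mem_sdiff.mpr ⟨hi, hiS⟩)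
      have := rootA_le A (predOf A i hne)
      have hlt := (predOf_spec hne).2
      rw [rootA_spec, dif_pos hne] at hri
      omega
    · intro hiS
      rw [rootA_spec, dif_neg]
      intro hne
      exact (mem_sdiff.mp ((hpredne i).mp hne)).2 hiS
  set P := fiberPartition (Finset.Icc 1 n) (rootA A) with hP
  have hparts : ∀ B, B ∈ P.parts ↔
      ∃ x ∈ Finset.Icc 1 n, B = (Finset.Icc 1 n).filter (fun j => rootA A j = rootA A x) := by
    intro B
    constructor
    · intro hB
      obtain ⟨x, hx, hBx⟩ := mem_image.mp hB
      exact ⟨x, hx, hBx.symm⟩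
    · rintro ⟨x, hx, rfl⟩
      exact mem_image_of_mem _ hx
  have hminset : minsetOf P = S := by
    ext i
    rw [minsetOf, mem_filter]
    constructor
    · rintro ⟨hiI, B, hB, hiB, hminB⟩
      obtain ⟨x, hx, rfl⟩ := (hparts B).mp hB
      have hix : rootA A i = rootA A x := (mem_filter.mp hiB).2
      have hrB : rootA A i ∈ (Finset.Icc 1 n).filter (fun j => rootA A j = rootA A x) := by
        rw [mem_filter]
        exact ⟨hroot_mem i hiI, by rw [rootA_rootA]; exact hix⟩
      have h5 := hminB _ hrB
      have h6 := rootA_le A i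
      have : rootA A i = i := by omega
      exact (hroot_self i hiI).mp this
    · intro hiS
      have hiI : i ∈ Finset.Icc 1 n := hS hiS
      have hri : rootA A i = i := (hroot_self i hiI).mpr hiS
      refine ⟨hiI, (Finset.Icc 1 n).filter (fun j => rootA A j = rootA A i),
        (hparts _).mpr ⟨i, hiI, rfl⟩, mem_filter.mpr ⟨hiI, rfl⟩, ?_⟩
      intro j hj
      have := (mem_filter.mp hj).2
      have := rootA_le A j
      omega
  have hmaxset : maxsetOf P = T := by
    ext i
    rw [maxsetOf, mem_filter]
    constructor
    · rintro ⟨hiI, B, hB, hiB, hmaxB⟩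
      obtain ⟨x, hx, rfl⟩ := (hparts B).mp hB
      have hix : rootA A i = rootA A x := (mem_filter.mp hiB).2
      by_contra hiT
      obtain ⟨b, hb⟩ := (hsuccne i).mpr (mem_sdiff.mpr ⟨hiI, hiT⟩)
      have hbB : b ∈ (Finset.Icc 1 n).filter (fun j => rootA A j = rootA A x) := by
        rw [mem_filter]
        exact ⟨(hAmem _ hb).2, by rw [rootA_arc hinjs h4 hb]; exact hix⟩
      exact absurd (hmaxB b hbB) (not_le.mpr (h4 _ hb))
    · intro hiT
      have hiI : i ∈ Finset.Icc 1 n := hT hiT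
      refine ⟨hiI, (Finset.Icc 1 n).filter (fun j => rootA A j = rootA A i),
        (hparts _).mpr ⟨i, hiI, rfl⟩, mem_filter.mpr ⟨hiI, rfl⟩, ?_⟩
      intro j hj
      by_contra hij
      push_neg at hij
      have hroot : rootA A i = rootA A j := ((mem_filter.mp hj).2).symm
      have hrtg := chain_conn hinjf hinjs h4 (i + j) i j le_rfl hroot (le_of_lt hij)
      rcases hrtg.cases_head with heq | ⟨d, hid, -⟩
      · omega
      · exact (mem_sdiff.mp ((hsuccne i).mp ⟨d, hid⟩)).2 hiT
  refine ⟨P, hminset, hmaxset, ?_⟩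
  ext p
  obtain ⟨a, b⟩ := p
  rw [mem_arcsOf]
  constructor
  · rintro ⟨haI, hbI, hab, B, hB, haB, hbB, hbet⟩
    obtain ⟨x, hx, rfl⟩ := (hparts B).mp hB
    have hroot : rootA A a = rootA A b := by
      rw [(mem_filter.mp haB).2, (mem_filter.mp hbB).2]
    have hrtg := chain_conn hinjf hinjs h4 (a + b) a b le_rfl hroot (le_of_lt hab)
    rcases hrtg.cases_head with heq | ⟨d, had, hdb⟩
    · omega
    · have hdleb : d ≤ b := rtg_le h4 hdb
      have hadlt : a < d := h4 _ had
      rcases eq_or_lt_of_le hdleb with rfl | hdlt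
      · exact had
      · exfalso
        apply hbet d _ hadlt hdlt
        rw [mem_filter]
        refine ⟨(hAmem _ had).2, ?_⟩
        rw [rootA_arc hinjs h4 had, ← (mem_filter.mp haB).2]
  · intro hab
    have haI : a ∈ Finset.Icc 1 n := (hAmem _ hab).1
    have hbI : b ∈ Finset.Icc 1 n := (hAmem _ hab).2
    refine ⟨haI, hbI, h4 _ hab, (Finset.Icc 1 n).filter (fun j => rootA A j = rootA A a),
      (hparts _).mpr ⟨a, haI, rfl⟩, mem_filter.mpr ⟨haI, rfl⟩,
      mem_filter.mpr ⟨hbI, rootA_arc hinjs h4 hab⟩, ?_⟩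
    intro k hk hak hkb
    have hroot : rootA A a = rootA A k := ((mem_filter.mp hk).2).symm
    have hrtg := chain_conn hinjf hinjs h4 (a + k) a k le_rfl hroot (le_of_lt hak)
    rcases hrtg.cases_head with heq | ⟨d, had, hdk⟩
    · omega
    · have hdb : d = b := by
        have : ((a, d) : ℕ × ℕ) = (a, b) := hinjf had hab rfl
        exact congrArg Prod.snd this
      rw [hdb] at hdk
      exact absurd (rtg_le h4 hdk) (not_le.mpr hkb)

end PnSTProof

theorem pnST_card (n : ℕ) (S T : Finset ℕ)
    (hS : S ⊆ Finset.Icc 1 n) (hT : T ⊆ Finset.Icc 1 n) (hcard : S.card = T.card) :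
    (pnST n S T).card = ∏ i ∈ Finset.Icc 1 n \ T, hST n S T i := by
  have hRD : (Finset.Icc 1 n \ S).card = (Finset.Icc 1 n \ T).card := by
    rw [card_sdiff_of_subset hS, card_sdiff_of_subset hT, hcard]
  have hbij : (pnST n S T).card
      = (PnSTProof.graphs (Finset.Icc 1 n \ T) (Finset.Icc 1 n \ S)).card := by
    apply Finset.card_bij (fun P _ => arcsOf P)
    · intro P hP
      rw [pnST, mem_filter] at hP
      exact PnSTProof.arcsOf_mem_graphs hS hT hP.2.1 hP.2.2
    · intro P hP Q hQ h
      exact PnSTProof.arcsOf_inj h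
    · intro A hA
      obtain ⟨P, h1, h2, h3⟩ := PnSTProof.graphs_surj hS hT hcard hA
      exact ⟨P, by rw [pnST, mem_filter]; exact ⟨mem_univ _, h1, h2⟩, h3⟩
  rw [hbij, PnSTProof.graphs_card _ _ hRD]
  apply Finset.prod_congr rfl
  intro i hi
  rw [mem_sdiff, Finset.mem_Icc] at hi
  have hi1 : 1 ≤ i := hi.1.1
  have hi2 : i ≤ n := hi.1.2
  have hRf : (Finset.Icc 1 n \ S).filter (fun x => i < x)
      = Finset.Icc (i+1) n \ (S ∩ Finset.Icc (i+1) n) := by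
    ext x
    simp only [mem_filter, mem_sdiff, Finset.mem_Icc, mem_inter]
    constructor
    · rintro ⟨⟨⟨hx1, hx2⟩, hxS⟩, hix⟩
      exact ⟨⟨by omega, hx2⟩, fun h => absurd h.1 hxS⟩
    · rintro ⟨⟨hx1, hx2⟩, hxS⟩
      exact ⟨⟨⟨by omega, hx2⟩, fun h => hxS ⟨h, by omega, hx2⟩⟩, by omega⟩
  have hTf : (Finset.Icc 1 n \ T).filter (fun x => i < x)
      = Finset.Icc (i+1) n \ (T ∩ Finset.Icc (i+1) n) := by
    ext x
    simp only [mem_filter, mem_sdiff, Finset.mem_Icc, mem_inter]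
    constructor
    · rintro ⟨⟨⟨hx1, hx2⟩, hxT⟩, hix⟩
      exact ⟨⟨by omega, hx2⟩, fun h => absurd h.1 hxT⟩
    · rintro ⟨⟨hx1, hx2⟩, hxT⟩
      exact ⟨⟨⟨by omega, hx2⟩, fun h => hxT ⟨h, by omega, hx2⟩⟩, by omega⟩
  have b1 : (S ∩ Finset.Icc (i+1) n).card ≤ n + 1 - (i+1) := by
    rw [← Nat.card_Icc]
    exact card_le_card inter_subset_right
  have b2 : (T ∩ Finset.Icc (i+1) n).card ≤ n + 1 - (i+1) := by
    rw [← Nat.card_Icc]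
    exact card_le_card inter_subset_right
  rw [hRf, hTf, card_sdiff_of_subset inter_subset_right, card_sdiff_of_subset inter_subset_right, Nat.card_Icc]
  simp only [hST]
  omega
end

section
/- Let w be a word of distinct positive integers and a a letter not in w, with σ = wa. Then Foata's second fundamental transformation Φ satisfies inv(Φ(σ)) = maj(σ), where Φ is defined recursively by Φ(u) = u for |u| = 1 and Φ(w a) = γ_a(Φ(w)) a, with γ_a defined via the a-factorization: if the last letter of w is less than a, write w = v₁b₁⋯v_p b_p where each bᵢ < a and each vᵢ is a (possibly empty) word of letters > a; if the last letter of w is greater than a, write w = v₁b₁⋯v_p b_p where each bᵢ > a and each vᵢ consists of letters < a; in both cases γ_a(w) = b₁v₁⋯b_p v_p. -/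
open Finset
open scoped Classical

/-- γ_a(w): via the a-factorization w = v₁b₁⋯v_p b_p (the bᵢ are the letters on the same
side of a as the last letter of w), γ_a(w) = b₁v₁⋯b_p v_p. -/
def gammaA (a : ℕ) (w : List ℕ) : List ℕ :=
  match w.getLast? with
  | none => []
  | some t =>
    (w.foldl (fun (st : List ℕ × List ℕ) x =>
        if decide (x < a) = decide (t < a) then (st.1 ++ [x] ++ st.2.reverse, [])
        else (st.1, x :: st.2)) ([], [])).1

/-- Foata's second fundamental transformation, defined on the reversed word:
Φ(wa) = γ_a(Φ(w))a. -/
def foataRev : List ℕ → List ℕ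
  | [] => []
  | a :: rest => gammaA a (foataRev rest) ++ [a]

/-- Foata's second fundamental transformation -/
def foata (w : List ℕ) : List ℕ := foataRev w.reverse

def invAux : List ℕ → ℕ
  | [] => 0
  | x :: xs => xs.countP (fun y => decide (y < x)) + invAux xs

lemma countP_eq_sum (l : List ℕ) (p : ℕ → Bool) :
    l.countP p = ∑ i ∈ Finset.range l.length, if p (l.getD i 0) then 1 else 0 := by
  induction l with
  | nil => simp
  | cons x xs ih =>
    rw [List.countP_cons, List.length_cons, Finset.sum_range_succ']
    simp [ih, Nat.add_comm]

lemma invList_eq_invAux (l : List ℕ) : invList l = invAux l := by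
  induction l with
  | nil => simp [invList, invAux]
  | cons x xs ih =>
    rw [invList, Finset.card_filter, Finset.sum_product]
    rw [List.length_cons, Finset.sum_range_succ']
    have h0 : ∑ j ∈ Finset.range (xs.length + 1),
        (if (0:ℕ) < j ∧ (x::xs).getD j 0 < (x::xs).getD 0 0 then 1 else 0)
        = xs.countP (fun y => decide (y < x)) := by
      rw [Finset.sum_range_succ', countP_eq_sum]
      simp
    have h1 : ∀ i, ∑ j ∈ Finset.range (xs.length + 1),
        (if (i+1) < j ∧ (x::xs).getD j 0 < (x::xs).getD (i+1) 0 then 1 else 0)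
        = ∑ j ∈ Finset.range xs.length,
        (if i < j ∧ xs.getD j 0 < xs.getD i 0 then 1 else 0) := by
      intro i
      rw [Finset.sum_range_succ']
      simp
    simp only [h1, h0]
    rw [invAux, ← ih, invList, Finset.card_filter, Finset.sum_product]
    ring

lemma invAux_insert (l₁ l₂ : List ℕ) (x : ℕ) :
    invAux (l₁ ++ x :: l₂) = invAux (l₁ ++ l₂)
      + l₁.countP (fun y => decide (x < y)) + l₂.countP (fun y => decide (y < x)) := by
  induction l₁ with
  | nil => simp [invAux]; omega
  | cons y l₁ ih =>
    simp only [List.cons_append, invAux, List.countP_append, List.countP_cons, ih]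
    by_cases h : x < y <;> by_cases h' : y < x <;> simp [h, h'] <;> omega

lemma invAux_concat (l : List ℕ) (x : ℕ) :
    invAux (l ++ [x]) = invAux l + l.countP (fun y => decide (x < y)) := by
  have := invAux_insert l [] x
  simpa using this

lemma majList_concat (u : List ℕ) (t a : ℕ) :
    majList ((u ++ [t]) ++ [a]) = majList (u ++ [t]) + if a < t then u.length + 1 else 0 := by
  have hlen : ((u ++ [t]) ++ [a]).length = u.length + 2 := by simp
  have hlen' : (u ++ [t]).length = u.length + 1 := by simp
  rw [majList, majList, hlen, hlen']
  have h21 : u.length + 2 - 1 = u.length + 1 := rfl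
  rw [h21]
  rw [Finset.sum_range_succ]
  have hmid : ∀ i < u.length, ((u ++ [t]) ++ [a]).getD i 0 = (u ++ [t]).getD i 0 := by
    intro i hi
    exact List.getD_append _ _ _ _ (by simp; omega)
  have hmid' : ∀ i < u.length + 1, ((u ++ [t]) ++ [a]).getD i 0 = (u ++ [t]).getD i 0 := by
    intro i hi
    exact List.getD_append _ _ _ _ (by simp; omega)
  have hlast : ((u ++ [t]) ++ [a]).getD (u.length + 1) 0 = a := by
    rw [List.getD_append_right _ _ _ _ (by simp)]
    simp
  have ht : (u ++ [t]).getD u.length 0 = t := by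
    rw [List.getD_append_right _ _ _ _ (by simp)]
    simp
  congr 1
  · apply Finset.sum_congr rfl
    intro i hi
    rw [Finset.mem_range] at hi
    rw [hmid' _ (by omega), hmid' _ (by omega)]
  · rw [hlast, hmid' _ (by omega), ht]

lemma gamma_invariant (a t : ℕ) (v : List ℕ) (hv : ∀ x ∈ v, x ≠ a) :
    ∀ st : List ℕ × List ℕ, st = v.foldl (fun (st : List ℕ × List ℕ) x =>
        if decide (x < a) = decide (t < a) then (st.1 ++ [x] ++ st.2.reverse, [])
        else (st.1, x :: st.2)) ([], []) →
    (st.1 ++ st.2.reverse).Perm v ∧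
    (∀ x ∈ st.2, ¬(decide (x < a) = decide (t < a))) ∧
    (invAux (st.1 ++ st.2.reverse) + (if t < a then st.1.countP (fun y => decide (a < y)) else 0)
      = invAux v + (if t < a then 0 else st.1.countP (fun y => decide (y < a)))) := by
  induction v using List.reverseRecOn with
  | nil => intro st hst; simp [hst, invAux]
  | append_singleton v x ih =>
    intro st hst
    obtain ⟨d, p, hdp⟩ : ∃ d p, (v.foldl (fun (st : List ℕ × List ℕ) x =>
        if decide (x < a) = decide (t < a) then (st.1 ++ [x] ++ st.2.reverse, [])
        else (st.1, x :: st.2)) ([], [])) = (d, p) := ⟨_, _, rfl⟩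
    obtain ⟨hperm, hp, hinv⟩ := ih (fun y hy => hv y (by simp [hy])) (d, p) hdp.symm
    simp only at hperm hp hinv
    rw [List.foldl_concat, hdp] at hst
    subst hst
    have hxa : x ≠ a := hv x (by simp)
    have hmemp : ∀ y ∈ p, y ∈ v := fun y hy => hperm.mem_iff.1 (by simp [hy])
    have hcountv : ∀ q : ℕ → Bool, v.countP q = d.countP q + p.countP q := by
      intro q
      rw [← hperm.countP_eq, List.countP_append, (p.reverse_perm).countP_eq]
    have hcrev : ∀ q : ℕ → Bool, p.reverse.countP q = p.countP q :=
      fun q => (p.reverse_perm).countP_eq q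
    by_cases hx : decide (x < a) = decide (t < a)
    · rw [if_pos hx]
      refine ⟨?_, by simp, ?_⟩
      · simp only [List.reverse_nil, List.append_nil]
        have h1 : d ++ [x] ++ p.reverse = d ++ x :: p.reverse := by simp
        rw [h1]
        refine List.perm_middle.trans ?_
        exact ((List.perm_append_singleton x _).symm.trans (hperm.append_right [x]))
      · simp only [List.reverse_nil, List.append_nil]
        have e1 : invAux (d ++ [x] ++ p.reverse) = invAux (d ++ p.reverse)
            + d.countP (fun y => decide (x < y)) + p.reverse.countP (fun y => decide (y < x)) := by
          rw [show d ++ [x] ++ p.reverse = d ++ x :: p.reverse by simp, invAux_insert]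
        have e2 : invAux (v ++ [x]) = invAux v + v.countP (fun y => decide (x < y)) :=
          invAux_concat v x
        have hcx : ∀ q : ℕ → Bool, (d ++ [x] ++ p.reverse).countP q
            = d.countP q + (if q x then 1 else 0) + p.countP q := by
          intro q
          rw [List.countP_append, List.countP_append, hcrev]
          simp only [List.countP_cons, List.countP_nil]
          omega
        by_cases ht : t < a
        · have hxlt : x < a := by
            have h2 : decide (t < a) = true := by simp [ht]
            rw [h2] at hx
            exact of_decide_eq_true hx
          have hpgt : ∀ y ∈ p, a < y := by
            intro y hy
            have h1 := hp y hy
            have h2 : decide (t < a) = true := by simp [ht]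
            rw [h2] at h1
            have h3 : ¬ (y < a) := fun hlt => h1 (by simp [hlt])
            have h4 := hv y (by simp [hmemp y hy])
            omega
          have c1 : p.reverse.countP (fun y => decide (y < x)) = 0 := by
            rw [List.countP_eq_zero]
            intro y hy
            have := hpgt y ((p.reverse_perm).mem_iff.1 hy)
            simp; omega
          have c2 : p.countP (fun y => decide (x < y)) = p.length := by
            rw [List.countP_eq_length]
            intro y hy; have := hpgt y hy; simp; omega
          have c3 : p.countP (fun y => decide (a < y)) = p.length := by
            rw [List.countP_eq_length]
            intro y hy; have := hpgt y hy; simp; omega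
          simp only [if_pos ht] at hinv ⊢
          rw [e1, e2, c1, hcx, hcountv (fun y => decide (x < y)), c2, c3]
          have hax : (if (decide (a < x) : Bool) = true then 1 else 0) = 0 := by
            simp; omega
          rw [hax]
          omega
        · have hxgt : a < x := by
            have h2 : decide (t < a) = false := by simp [ht]
            rw [h2] at hx
            have h3 : ¬ (x < a) := of_decide_eq_false hx
            omega
          have hplt : ∀ y ∈ p, y < a := by
            intro y hy
            have h1 := hp y hy
            have h2 : decide (t < a) = false := by simp [ht]
            rw [h2] at h1
            by_contra hcon
            exact h1 (by simp; omega)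
          have c1 : p.reverse.countP (fun y => decide (y < x)) = p.length := by
            rw [hcrev, List.countP_eq_length]
            intro y hy; have := hplt y hy; simp; omega
          have c2 : p.countP (fun y => decide (x < y)) = 0 := by
            rw [List.countP_eq_zero]
            intro y hy; have := hplt y hy; simp; omega
          have c3 : p.countP (fun y => decide (y < a)) = p.length := by
            rw [List.countP_eq_length]
            intro y hy; have := hplt y hy; simpa
          simp only [if_neg ht] at hinv ⊢
          rw [e1, e2, c1, hcx, hcountv (fun y => decide (x < y)), c2, c3]
          have hax : (if (decide (x < a) : Bool) = true then 1 else 0) = 0 := by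
            simp; omega
          rw [hax]
          omega
    · rw [if_neg hx]
      have harr : d ++ (x :: p).reverse = (d ++ p.reverse) ++ [x] := by simp
      refine ⟨?_, ?_, ?_⟩
      · simp only; rw [harr]; exact hperm.append_right [x]
      · intro y hy
        simp only [List.mem_cons] at hy
        rcases hy with h | h
        · subst h; exact hx
        · exact hp y h
      · simp only
        rw [harr, invAux_concat, invAux_concat, (hperm.countP_eq _)]
        by_cases ht : t < a
        · simp only [if_pos ht] at hinv ⊢; omega
        · simp only [if_neg ht] at hinv ⊢; omega

lemma gammaA_concat (a t : ℕ) (v : List ℕ) :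
    gammaA a (v ++ [t]) = ((v.foldl (fun (st : List ℕ × List ℕ) x =>
        if decide (x < a) = decide (t < a) then (st.1 ++ [x] ++ st.2.reverse, [])
        else (st.1, x :: st.2)) ([], [])).1) ++ [t]
      ++ ((v.foldl (fun (st : List ℕ × List ℕ) x =>
        if decide (x < a) = decide (t < a) then (st.1 ++ [x] ++ st.2.reverse, [])
        else (st.1, x :: st.2)) ([], [])).2).reverse := by
  simp [gammaA, List.getLast?_concat, List.foldl_concat]

lemma gammaA_nil (a : ℕ) : gammaA a [] = [] := rfl

lemma gamma_perm (a : ℕ) (w : List ℕ) (hw : ∀ x ∈ w, x ≠ a) : (gammaA a w).Perm w := by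
  rcases List.eq_nil_or_concat w with rfl | ⟨v, t, rfl⟩
  · simp [gammaA_nil]
  · rw [List.concat_eq_append] at *
    obtain ⟨hperm, hp, hinv⟩ := gamma_invariant a t v (fun y hy => hw y (by simp [hy])) _ rfl
    rw [gammaA_concat]
    have h1 : ∀ d p : List ℕ, d ++ [t] ++ p = d ++ t :: p := by simp
    rw [h1]
    refine List.perm_middle.trans ?_
    refine ((List.perm_append_singleton t _).symm.trans ?_)
    exact hperm.append_right [t]

lemma gamma_inv_lt (a t : ℕ) (v : List ℕ) (hv : ∀ x ∈ v ++ [t], x ≠ a) (ht : t < a) :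
    invAux (gammaA a (v ++ [t])) + (v ++ [t]).countP (fun y => decide (a < y))
      = invAux (v ++ [t]) := by
  obtain ⟨hperm, hp, hinv⟩ := gamma_invariant a t v (fun y hy => hv y (by simp [hy])) _ rfl
  set d := (v.foldl (fun (st : List ℕ × List ℕ) x =>
        if decide (x < a) = decide (t < a) then (st.1 ++ [x] ++ st.2.reverse, [])
        else (st.1, x :: st.2)) ([], [])).1 with hd
  set p := (v.foldl (fun (st : List ℕ × List ℕ) x =>
        if decide (x < a) = decide (t < a) then (st.1 ++ [x] ++ st.2.reverse, [])
        else (st.1, x :: st.2)) ([], [])).2 with hpd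
  rw [gammaA_concat, ← hd, ← hpd]
  simp only [if_pos ht] at hinv
  have hmemp : ∀ y ∈ p, y ∈ v := fun y hy => hperm.mem_iff.1 (by simp [hy])
  have hpgt : ∀ y ∈ p, a < y := by
    intro y hy
    have h1 := hp y hy
    have h2 : decide (t < a) = true := by simp [ht]
    rw [h2] at h1
    have h3 : ¬ (y < a) := fun hlt => h1 (by simp [hlt])
    have h4 := hv y (by simp [hmemp y hy])
    omega
  have hcrev : ∀ q : ℕ → Bool, p.reverse.countP q = p.countP q :=
    fun q => (p.reverse_perm).countP_eq q
  have hcountv : ∀ q : ℕ → Bool, v.countP q = d.countP q + p.countP q := by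
    intro q
    rw [← hperm.countP_eq, List.countP_append, hcrev]
  have e1 : invAux (d ++ [t] ++ p.reverse) = invAux (d ++ p.reverse)
      + d.countP (fun y => decide (t < y)) + p.reverse.countP (fun y => decide (y < t)) := by
    rw [show d ++ [t] ++ p.reverse = d ++ t :: p.reverse by simp, invAux_insert]
  have e2 : invAux (v ++ [t]) = invAux v + v.countP (fun y => decide (t < y)) := invAux_concat v t
  have c1 : p.reverse.countP (fun y => decide (y < t)) = 0 := by
    rw [hcrev, List.countP_eq_zero]
    intro y hy; have := hpgt y hy; simp; omega
  have c2 : p.countP (fun y => decide (t < y)) = p.length := by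
    rw [List.countP_eq_length]
    intro y hy; have := hpgt y hy; simp; omega
  have c3 : p.countP (fun y => decide (a < y)) = p.length := by
    rw [List.countP_eq_length]
    intro y hy; have := hpgt y hy; simp; omega
  have e3 : (v ++ [t]).countP (fun y => decide (a < y))
      = v.countP (fun y => decide (a < y)) := by
    rw [List.countP_append, List.countP_singleton]
    simp; omega
  rw [e1, e2, e3, c1, hcountv (fun y => decide (a < y)),
    hcountv (fun y => decide (t < y)), c2, c3]
  omega

lemma gamma_inv_gt (a t : ℕ) (v : List ℕ) (hv : ∀ x ∈ v ++ [t], x ≠ a) (ht : a < t) :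
    invAux (gammaA a (v ++ [t]))
      = invAux (v ++ [t]) + (v ++ [t]).countP (fun y => decide (y < a)) := by
  obtain ⟨hperm, hp, hinv⟩ := gamma_invariant a t v (fun y hy => hv y (by simp [hy])) _ rfl
  set d := (v.foldl (fun (st : List ℕ × List ℕ) x =>
        if decide (x < a) = decide (t < a) then (st.1 ++ [x] ++ st.2.reverse, [])
        else (st.1, x :: st.2)) ([], [])).1 with hd
  set p := (v.foldl (fun (st : List ℕ × List ℕ) x =>
        if decide (x < a) = decide (t < a) then (st.1 ++ [x] ++ st.2.reverse, [])
        else (st.1, x :: st.2)) ([], [])).2 with hpd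
  rw [gammaA_concat, ← hd, ← hpd]
  have htlt : ¬ (t < a) := by omega
  simp only [if_neg htlt] at hinv
  have hmemp : ∀ y ∈ p, y ∈ v := fun y hy => hperm.mem_iff.1 (by simp [hy])
  have hplt : ∀ y ∈ p, y < a := by
    intro y hy
    have h1 := hp y hy
    have h2 : decide (t < a) = false := by simp [htlt]
    rw [h2] at h1
    by_contra hcon
    exact h1 (by simp; omega)
  have hcrev : ∀ q : ℕ → Bool, p.reverse.countP q = p.countP q :=
    fun q => (p.reverse_perm).countP_eq q
  have hcountv : ∀ q : ℕ → Bool, v.countP q = d.countP q + p.countP q := by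
    intro q
    rw [← hperm.countP_eq, List.countP_append, hcrev]
  have e1 : invAux (d ++ [t] ++ p.reverse) = invAux (d ++ p.reverse)
      + d.countP (fun y => decide (t < y)) + p.reverse.countP (fun y => decide (y < t)) := by
    rw [show d ++ [t] ++ p.reverse = d ++ t :: p.reverse by simp, invAux_insert]
  have e2 : invAux (v ++ [t]) = invAux v + v.countP (fun y => decide (t < y)) := invAux_concat v t
  have c1 : p.reverse.countP (fun y => decide (y < t)) = p.length := by
    rw [hcrev, List.countP_eq_length]
    intro y hy; have := hplt y hy; simp; omega
  have c2 : p.countP (fun y => decide (t < y)) = 0 := by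
    rw [List.countP_eq_zero]
    intro y hy; have := hplt y hy; simp; omega
  have c3 : p.countP (fun y => decide (y < a)) = p.length := by
    rw [List.countP_eq_length]
    intro y hy; have := hplt y hy; simpa
  have e3 : (v ++ [t]).countP (fun y => decide (y < a))
      = v.countP (fun y => decide (y < a)) := by
    rw [List.countP_append, List.countP_singleton]
    simp; omega
  rw [e1, e2, e3, c1, hcountv (fun y => decide (y < a)),
    hcountv (fun y => decide (t < y)), c2, c3]
  omega

lemma foata_concat (w : List ℕ) (a : ℕ) :
    foata (w ++ [a]) = gammaA a (foata w) ++ [a] := by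
  simp [foata, foataRev]

lemma foata_perm (w : List ℕ) (hw : w.Nodup) : (foata w).Perm w := by
  induction w using List.reverseRecOn with
  | nil => simp [foata, foataRev]
  | append_singleton w a ih =>
    have hnd : w.Nodup ∧ a ∉ w := by
      rw [List.nodup_append] at hw
      refine ⟨hw.1, fun hmem => ?_⟩
      exact hw.2.2 a hmem a (by simp) rfl
    have ihp := ih hnd.1
    rw [foata_concat]
    have hva : ∀ x ∈ foata w, x ≠ a := by
      intro x hx hxa
      exact hnd.2 (hxa ▸ ihp.mem_iff.1 hx)
    exact ((gamma_perm a (foata w) hva).append_right [a]).trans (ihp.append_right [a])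

lemma countP_lt_add_gt (a : ℕ) (l : List ℕ) (hl : ∀ x ∈ l, x ≠ a) :
    l.countP (fun y => decide (y < a)) + l.countP (fun y => decide (a < y)) = l.length := by
  induction l with
  | nil => simp
  | cons x xs ih =>
    have hx := hl x (by simp)
    rw [List.countP_cons, List.countP_cons, List.length_cons,
      ← ih (fun y hy => hl y (by simp [hy]))]
    simp only [decide_eq_true_eq]
    by_cases h : x < a
    · rw [if_pos h, if_neg (by omega)]; omega
    · rw [if_neg h, if_pos (by omega)]; omega

lemma foata_maj (w : List ℕ) (hw : w.Nodup) : invAux (foata w) = majList w := by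
  induction w using List.reverseRecOn with
  | nil => simp [foata, foataRev, invAux, majList]
  | append_singleton w a ih =>
    have hnd : w.Nodup ∧ a ∉ w := by
      rw [List.nodup_append] at hw
      exact ⟨hw.1, fun hmem => hw.2.2 a hmem a (by simp) rfl⟩
    have ihm := ih hnd.1
    have hvp := foata_perm w hnd.1
    have hva : ∀ x ∈ foata w, x ≠ a := by
      intro x hx hxa
      exact hnd.2 (hxa ▸ hvp.mem_iff.1 hx)
    rw [foata_concat, invAux_concat, (gamma_perm a (foata w) hva).countP_eq]
    rcases List.eq_nil_or_concat w with rfl | ⟨u, t, rfl⟩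
    · have : foata ([] : List ℕ) = [] := by simp [foata, foataRev]
      rw [this]
      simp [gammaA, invAux, majList]
    · rw [List.concat_eq_append] at *
      -- foata (u ++ [t]) ends in t
      obtain ⟨u', hu'⟩ : ∃ u', foata (u ++ [t]) = u' ++ [t] := ⟨_, foata_concat u t⟩
      have hta : t ≠ a := fun h => hnd.2 (by simp [h])
      by_cases ht : t < a
      · have key := gamma_inv_lt a t u' (by rw [← hu']; exact hva) ht
        rw [← hu'] at key
        rw [majList_concat, if_neg (by omega)]
        omega
      · have ht' : a < t := by omega
        have key := gamma_inv_gt a t u' (by rw [← hu']; exact hva) ht'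
        rw [← hu'] at key
        have hade : (foata (u ++ [t])).countP (fun y => decide (y < a))
            + (foata (u ++ [t])).countP (fun y => decide (a < y))
            = (foata (u ++ [t])).length := countP_lt_add_gt a _ hva
        have hlen : (foata (u ++ [t])).length = u.length + 1 := by
          rw [hvp.length_eq]; simp
        rw [majList_concat, if_pos ht']
        omega

theorem foata_inv_eq_maj (w : List ℕ) (a : ℕ)
    (hpos : ∀ x ∈ w ++ [a], 0 < x) (hnd : (w ++ [a]).Nodup) :
    invList (foata (w ++ [a])) = majList (w ++ [a]) := by
  rw [invList_eq_invAux]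
  exact foata_maj (w ++ [a]) hnd
end

section
/- Let P be a partition of [n] (with standard representation 𝒢_P) and let M(P) be the matching obtained from P by splitting each vertex i that is both a right-hand and a left-hand endpoint into two adjacent vertices i⁰ < i¹ (the arc ending at i now ends at i⁰, and the arc starting at i now starts at i¹) and deleting isolated vertices. Then Cr₂(P) = Cr₂(M(P)) and pmaj(P) = pmaj(M(P)). -/
open Finset
open scoped Classical

/-- the matching M(P) obtained from the arc set of a partition by splitting each vertex i
that is both a right-hand and a left-hand endpoint into i⁰ = i < i¹ = i + 1/2 -/
noncomputable def splitArcs (A : Finset (ℕ × ℕ)) : Finset (ℚ × ℚ) :=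
  A.image (fun e =>
    ((if ∃ f ∈ A, f.2 = e.1 then (e.1 : ℚ) + 1/2 else (e.1 : ℚ)), (e.2 : ℚ)))

namespace SplitAux

variable (A : Finset (ℕ × ℕ))

noncomputable def g (x : ℕ) : ℚ := if ∃ f ∈ A, f.2 = x then (x : ℚ) + 1/2 else (x : ℚ)

noncomputable def φ (e : ℕ × ℕ) : ℚ × ℚ := (g A e.1, (e.2 : ℚ))

lemma splitArcs_eq : splitArcs A = A.image (φ A) := rfl

lemma cast_ne_cast_add_half (a b : ℕ) : (a : ℚ) ≠ (b : ℚ) + 1/2 := by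
  intro h
  have h2 : ((2 * a : ℕ) : ℚ) = ((2 * b + 1 : ℕ) : ℚ) := by push_cast; linarith
  have := Nat.cast_injective h2
  omega

lemma le_g (x : ℕ) : (x : ℚ) ≤ g A x := by
  unfold g; split <;> simp

lemma g_le (x : ℕ) : g A x ≤ (x : ℚ) + 1/2 := by
  unfold g; split <;> simp

lemma g_lt_g_iff {x y : ℕ} : g A x < g A y ↔ x < y := by
  constructor
  · intro h
    by_contra hn
    push_neg at hn
    rcases lt_or_eq_of_le hn with hy | hy
    · have h1 : (y : ℚ) + 1 ≤ (x : ℚ) := by exact_mod_cast hy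
      have h2 := g_le A y
      have h3 := le_g A x
      linarith
    · subst hy
      exact lt_irrefl _ h
  · intro h
    have h1 : (x : ℚ) + 1 ≤ (y : ℚ) := by exact_mod_cast h
    have h2 := g_le A x
    have h3 := le_g A y
    linarith

lemma g_lt_cast_iff {x y : ℕ} : g A x < (y : ℚ) ↔ x < y := by
  constructor
  · intro h
    have := le_g A x
    exact_mod_cast lt_of_le_of_lt this h
  · intro h
    have : (x : ℚ) + 1 ≤ (y : ℚ) := by exact_mod_cast h
    have := g_le A x
    linarith

lemma g_injective : Function.Injective (g A) := by
  intro x y h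
  rcases lt_trichotomy x y with hl | hl | hl
  · exact absurd h (ne_of_lt ((g_lt_g_iff A).2 hl))
  · exact hl
  · exact absurd h.symm (ne_of_lt ((g_lt_g_iff A).2 hl))

lemma φ_injective : Function.Injective (φ A) := by
  intro e f h
  obtain ⟨h1, h2⟩ := Prod.mk.injEq _ _ _ _ ▸ h
  have : e.1 = f.1 := g_injective A h1
  have h2' : e.2 = f.2 := by exact_mod_cast h2
  exact Prod.ext this h2'

lemma g_eq_half_iff {i x : ℕ} (hi : ∃ f ∈ A, f.2 = i) : g A x = (i : ℚ) + 1/2 ↔ x = i := by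
  constructor
  · intro h
    unfold g at h
    split at h
    · have : (x : ℚ) = (i : ℚ) := by linarith
      exact_mod_cast this
    · exact absurd h (cast_ne_cast_add_half x i)
  · rintro rfl
    unfold g
    rw [if_pos hi]

lemma g_ne_cast_of_right {i x : ℕ} (hi : ∃ f ∈ A, f.2 = i) : g A x ≠ (i : ℚ) := by
  intro h
  unfold g at h
  split at h
  · exact cast_ne_cast_add_half i x (by linarith)
  · rename_i hx
    have hxi : x = i := by exact_mod_cast h
    exact hx (hxi ▸ hi)

lemma g_eq_cast_iff_of_not_right {i x : ℕ} (hi : ¬ ∃ f ∈ A, f.2 = i) :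
    g A x = (i : ℚ) ↔ x = i := by
  constructor
  · intro h
    unfold g at h
    split at h
    · exact absurd h.symm (cast_ne_cast_add_half i x)
    · exact_mod_cast h
  · rintro rfl
    unfold g
    rw [if_neg hi]

lemma label_phi (e : ℕ × ℕ) : labelArc (A.image (φ A)) (φ A e) = labelArc A e := by
  unfold labelArc
  congr 1
  rw [Finset.filter_image]
  rw [Finset.card_image_of_injOn ((φ_injective A).injOn)]
  congr 1
  apply Finset.filter_congr
  intro f _
  simp only [φ, eq_iff_iff]
  exact g_lt_g_iff A

lemma cr2_split : cr2 (A.image (φ A)) = cr2 A := by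
  unfold cr2
  symm
  apply Finset.card_bij (fun p _ => (φ A p.1, φ A p.2))
  · rintro ⟨e, f⟩ hp
    simp only [Finset.mem_filter, Finset.mem_product] at hp ⊢
    obtain ⟨⟨he, hf⟩, h1, h2, h3⟩ := hp
    refine ⟨⟨Finset.mem_image_of_mem _ he, Finset.mem_image_of_mem _ hf⟩, ?_, ?_, ?_⟩
    · exact (g_lt_g_iff A).2 h1
    · exact (g_lt_cast_iff A).2 h2
    · show ((e.2 : ℚ)) < ((f.2 : ℚ)); exact_mod_cast h3
  · rintro ⟨e, f⟩ _ ⟨e', f'⟩ _ h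
    obtain ⟨h1, h2⟩ := Prod.mk.injEq _ _ _ _ ▸ h
    exact Prod.ext (φ_injective A h1) (φ_injective A h2)
  · rintro ⟨e', f'⟩ hq
    simp only [Finset.mem_filter, Finset.mem_product, Finset.mem_image] at hq
    obtain ⟨⟨⟨e, he, rfl⟩, ⟨f, hf, rfl⟩⟩, h1, h2, h3⟩ := hq
    refine ⟨(e, f), ?_, rfl⟩
    simp only [Finset.mem_filter, Finset.mem_product]
    refine ⟨⟨he, hf⟩, ?_, ?_, ?_⟩
    · exact (g_lt_g_iff A).1 h1
    · exact (g_lt_cast_iff A).1 h2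
    · have h3' : ((e.2 : ℚ)) < ((f.2 : ℚ)) := h3
      exact_mod_cast h3'

/-- the per-vertex step of the pmaj fold -/
noncomputable def pstep {α : Type*} [LinearOrder α] (B : Finset (α × α))
    (st : List (α × α) × ℕ) (i : α) : List (α × α) × ℕ :=
  let σ₁ := st.1.filter (fun e => e.1 ≠ i)
  let ends := (B.filter (fun e => e.2 = i)).toList
  let σ₂ := ends ++ σ₁
  (σ₂, st.2 + if ends.isEmpty then 0 else desList (σ₂.map (labelArc B)))

lemma pmajArcs_eq {α : Type*} [LinearOrder α] (B : Finset (α × α)) :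
    pmajArcs B =
      (((((B.image Prod.fst) ∪ (B.image Prod.snd)).sort (· ≤ ·)).reverse).foldl
        (pstep B) ([], 0)).2 := rfl

/-- the list of split vertices corresponding to an original vertex, increasing -/
noncomputable def stepL (i : ℕ) : List ℚ :=
  (i : ℚ) :: (if i ∈ A.image Prod.fst ∧ i ∈ A.image Prod.snd then [(i : ℚ) + 1/2] else [])

lemma mem_stepL {i : ℕ} {x : ℚ} :
    x ∈ stepL A i ↔ x = (i : ℚ) ∨
      ((i ∈ A.image Prod.fst ∧ i ∈ A.image Prod.snd) ∧ x = (i : ℚ) + 1/2) := by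
  unfold stepL
  split <;> rename_i hc
  · simp only [List.mem_cons, List.mem_singleton, List.not_mem_nil, or_false]
    tauto
  · simp only [List.mem_cons, List.not_mem_nil, or_false]
    constructor
    · intro h; exact Or.inl h
    · rintro (h | ⟨hcond, _⟩)
      · exact h
      · exact absurd hcond hc

lemma cast_le_of_mem_stepL {i : ℕ} {x : ℚ} (hx : x ∈ stepL A i) : (i : ℚ) ≤ x := by
  rw [mem_stepL] at hx
  rcases hx with rfl | ⟨_, rfl⟩
  · exact le_refl _
  · linarith

lemma stepL_le {i : ℕ} {x : ℚ} (hx : x ∈ stepL A i) : x ≤ (i : ℚ) + 1/2 := by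
  rw [mem_stepL] at hx
  rcases hx with rfl | ⟨_, rfl⟩
  · linarith
  · exact le_refl _

lemma sorted_flatMap (L : List ℕ) (hL : L.Pairwise (· < ·)) :
    (L.flatMap (stepL A)).Pairwise (· < ·) := by
  induction L with
  | nil => simp
  | cons i rest ih =>
    rw [List.flatMap_cons]
    rw [List.pairwise_append]
    refine ⟨?_, ih hL.of_cons, ?_⟩
    · unfold stepL
      split <;> simp
    · intro a ha b hb
      rw [List.mem_flatMap] at hb
      obtain ⟨j, hj, hbj⟩ := hb
      have hij : i < j := (List.pairwise_cons.1 hL).1 j hj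
      have h1 := stepL_le A ha
      have h2 := cast_le_of_mem_stepL A hbj
      have : (i : ℚ) + 1 ≤ (j : ℚ) := by exact_mod_cast hij
      linarith

noncomputable def E : Finset ℕ := A.image Prod.fst ∪ A.image Prod.snd

lemma mem_snd_iff (i : ℕ) : i ∈ A.image Prod.snd ↔ ∃ f ∈ A, f.2 = i := by
  simp [Finset.mem_image]

lemma mem_E'_iff (x : ℚ) :
    x ∈ (A.image (φ A)).image Prod.fst ∪ (A.image (φ A)).image Prod.snd ↔
      ∃ i ∈ E A, x ∈ stepL A i := by
  have hfst : x ∈ (A.image (φ A)).image Prod.fst ↔ ∃ a ∈ A, g A a.1 = x := by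
    simp only [Finset.mem_image]
    constructor
    · rintro ⟨p, ⟨a, ha, rfl⟩, rfl⟩
      exact ⟨a, ha, rfl⟩
    · rintro ⟨a, ha, rfl⟩
      exact ⟨φ A a, ⟨a, ha, rfl⟩, rfl⟩
  have hsnd : x ∈ (A.image (φ A)).image Prod.snd ↔ ∃ a ∈ A, (a.2 : ℚ) = x := by
    simp only [Finset.mem_image]
    constructor
    · rintro ⟨p, ⟨a, ha, rfl⟩, rfl⟩
      exact ⟨a, ha, rfl⟩
    · rintro ⟨a, ha, rfl⟩
      exact ⟨φ A a, ⟨a, ha, rfl⟩, rfl⟩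
  rw [Finset.mem_union, hfst, hsnd]
  constructor
  · rintro (⟨a, ha, rfl⟩ | ⟨a, ha, rfl⟩)
    · refine ⟨a.1, Finset.mem_union_left _ (Finset.mem_image_of_mem _ ha), ?_⟩
      by_cases hex : ∃ f ∈ A, f.2 = a.1
      · rw [mem_stepL]
        right
        refine ⟨⟨Finset.mem_image_of_mem _ ha, (mem_snd_iff A a.1).2 hex⟩, ?_⟩
        unfold g; rw [if_pos hex]
      · rw [mem_stepL]
        left
        unfold g; rw [if_neg hex]
    · refine ⟨a.2, Finset.mem_union_right _ (Finset.mem_image_of_mem _ ha), ?_⟩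
      rw [mem_stepL]; left; rfl
  · rintro ⟨i, hiE, hx⟩
    rw [mem_stepL] at hx
    rcases hx with rfl | ⟨⟨h1, h2⟩, rfl⟩
    · rcases Finset.mem_union.1 hiE with h | h
      · obtain ⟨a, ha, rfl⟩ := Finset.mem_image.1 h
        by_cases hex : ∃ f ∈ A, f.2 = a.1
        · right
          obtain ⟨f, hf, hf2⟩ := hex
          exact ⟨f, hf, by exact_mod_cast congrArg (Nat.cast : ℕ → ℚ) hf2⟩
        · left
          refine ⟨a, ha, ?_⟩
          unfold g; rw [if_neg hex]
      · obtain ⟨a, ha, rfl⟩ := Finset.mem_image.1 h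
        exact Or.inr ⟨a, ha, rfl⟩
    · obtain ⟨a, ha, rfl⟩ := Finset.mem_image.1 h1
      left
      refine ⟨a, ha, ?_⟩
      unfold g; rw [if_pos ((mem_snd_iff A a.1).1 h2)]

lemma sort_E' :
    (((A.image (φ A)).image Prod.fst ∪ (A.image (φ A)).image Prod.snd).sort (· ≤ ·)) =
      ((E A).sort (· ≤ ·)).flatMap (stepL A) := by
  have hs : ((E A).sort (· ≤ ·)).Pairwise (· < ·) := (Finset.sortedLT_sort _).pairwise
  have h2 : (((E A).sort (· ≤ ·)).flatMap (stepL A)).Pairwise (· < ·) := sorted_flatMap A _ hs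
  apply (fun h1 h2 h3 => List.Perm.eq_of_pairwise' (r := (· ≤ · : ℚ → ℚ → Prop)) h2 h3 h1)
  · apply List.perm_of_nodup_nodup_toFinset_eq (Finset.sort_nodup _ _) h2.nodup
    rw [Finset.sort_toFinset]
    ext x
    rw [List.mem_toFinset, List.mem_flatMap, mem_E'_iff]
    simp [Finset.mem_sort]
  · exact Finset.pairwise_sort _ _
  · exact h2.imp le_of_lt

lemma foldl_flatMap {α β γ : Type*} (l : List α) (f : α → List β) (op : γ → β → γ) (a : γ) :
    (l.flatMap f).foldl op a = l.foldl (fun acc x => (f x).foldl op acc) a := by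
  induction l generalizing a with
  | nil => rfl
  | cons x xs ih => rw [List.flatMap_cons, List.foldl_append, List.foldl_cons, ih]

lemma isEmpty_map {α β : Type*} (l : List α) (f : α → β) : (l.map f).isEmpty = l.isEmpty := by
  cases l <;> simp

lemma toList_image_small {α β : Type*} [DecidableEq α] [DecidableEq β] {s : Finset α}
    (f : α → β) (h : s.card ≤ 1) : (s.image f).toList = s.toList.map f := by
  rcases Nat.le_one_iff_eq_zero_or_eq_one.mp h with h0 | h1
  · rw [Finset.card_eq_zero] at h0; subst h0; simp
  · obtain ⟨a, rfl⟩ := Finset.card_eq_one.mp h1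
    simp [Finset.toList_singleton]

def RightUnique : Prop := ∀ e ∈ A, ∀ f ∈ A, e.2 = f.2 → e = f

lemma ends_card (hA : RightUnique A) (i : ℕ) : (A.filter (fun e => e.2 = i)).card ≤ 1 := by
  rw [Finset.card_le_one]
  intro a ha b hb
  rw [Finset.mem_filter] at ha hb
  exact hA a ha.1 b hb.1 (ha.2.trans hb.2.symm)

lemma ends_eq (i : ℕ) :
    (A.image (φ A)).filter (fun e => e.2 = (i : ℚ)) =
      (A.filter (fun e => e.2 = i)).image (φ A) := by
  rw [Finset.filter_image]
  congr 1
  apply Finset.filter_congr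
  intro e _
  simp only [φ, eq_iff_iff]
  exact Nat.cast_inj

lemma map_phi_filter (σ : List (ℕ × ℕ)) (q : ℚ) (i : ℕ)
    (hq : ∀ e : ℕ × ℕ, g A e.1 = q ↔ e.1 = i) :
    (σ.map (φ A)).filter (fun e => e.1 ≠ q) = (σ.filter (fun e => e.1 ≠ i)).map (φ A) := by
  rw [List.filter_map]
  congr 1
  apply List.filter_congr
  intro e _
  simp only [Function.comp_apply, φ, ne_eq, decide_eq_decide]
  simp only [hq e]

lemma label_comp : (labelArc (A.image (φ A)) ∘ φ A) = labelArc A := funext (label_phi A)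

lemma pstep_cast (hA : RightUnique A) (i : ℕ) (σ : List (ℕ × ℕ)) (c : ℕ)
    (hfilter : (σ.map (φ A)).filter (fun e => e.1 ≠ (i : ℚ)) =
      (σ.filter (fun e => e.1 ≠ i)).map (φ A)) :
    pstep (A.image (φ A)) (σ.map (φ A), c) (i : ℚ)
      = ((pstep A (σ, c) i).1.map (φ A), (pstep A (σ, c) i).2) := by
  have hends : ((A.image (φ A)).filter (fun e => e.2 = (i : ℚ))).toList
      = ((A.filter (fun e => e.2 = i)).toList).map (φ A) := by
    rw [ends_eq, toList_image_small _ (ends_card A hA i)]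
  simp only [pstep]
  rw [hends, hfilter, ← List.map_append]
  refine Prod.ext rfl ?_
  simp only [isEmpty_map]
  rw [List.map_map, label_comp]

lemma pstep_mem {σ : List (ℕ × ℕ)} {c : ℕ} {i : ℕ} (hσ : ∀ e ∈ σ, e ∈ A) :
    ∀ e ∈ (pstep A (σ, c) i).1, e ∈ A := by
  intro e he
  simp only [pstep, List.mem_append] at he
  rcases he with h | h
  · exact (Finset.mem_filter.1 (Finset.mem_toList.1 h)).1
  · exact hσ e (List.mem_of_mem_filter h)

lemma step_correspond (hA : RightUnique A) {i : ℕ} (hi : i ∈ E A)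
    (σ : List (ℕ × ℕ)) (hσ : ∀ e ∈ σ, e ∈ A) (c : ℕ) :
    ((stepL A i).reverse).foldl (pstep (A.image (φ A))) (σ.map (φ A), c)
      = ((pstep A (σ, c) i).1.map (φ A), (pstep A (σ, c) i).2) := by
  by_cases hr : i ∈ A.image Prod.snd
  · have hex : ∃ f ∈ A, f.2 = i := (mem_snd_iff A i).1 hr
    have hid : ∀ τ : List (ℕ × ℕ),
        (τ.map (φ A)).filter (fun e => e.1 ≠ (i : ℚ)) = τ.map (φ A) := by
      intro τ
      apply List.filter_eq_self.2
      intro e he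
      obtain ⟨a, _, rfl⟩ := List.mem_map.1 he
      exact decide_eq_true (g_ne_cast_of_right A hex (x := a.1))
    by_cases hl : i ∈ A.image Prod.fst
    · -- both: stepL = [i, i+1/2]
      have hstep : (stepL A i).reverse = [(i : ℚ) + 1/2, (i : ℚ)] := by
        unfold stepL; rw [if_pos ⟨hl, hr⟩]; rfl
      rw [hstep, List.foldl_cons, List.foldl_cons, List.foldl_nil]
      -- first step at i + 1/2
      have h1 : pstep (A.image (φ A)) (σ.map (φ A), c) ((i : ℚ) + 1/2)
          = ((σ.filter (fun e => e.1 ≠ i)).map (φ A), c) := by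
        have hempty : (A.image (φ A)).filter (fun e => e.2 = (i : ℚ) + 1/2) = ∅ := by
          rw [Finset.filter_eq_empty_iff]
          intro e he
          obtain ⟨a, _, rfl⟩ := Finset.mem_image.1 he
          exact cast_ne_cast_add_half a.2 i
        simp only [pstep, hempty, Finset.toList_empty, List.nil_append, List.isEmpty_nil,
          if_pos, Nat.add_zero]
        rw [map_phi_filter A σ _ i (fun e => g_eq_half_iff A hex)]
      rw [h1]
      -- second step at i
      set σ' := σ.filter (fun e => e.1 ≠ i) with hσ'
      have hff : σ'.filter (fun e => e.1 ≠ i) = σ' := by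
        apply List.filter_eq_self.2
        intro e he
        rw [hσ', List.mem_filter] at he
        exact he.2
      have h2 := pstep_cast A hA i σ' c (by rw [hid σ', hff])
      rw [h2]
      have h3 : pstep A (σ', c) i = pstep A (σ, c) i := by
        simp only [pstep, hff]
        rw [hσ']
      rw [h3]
    · -- right-only: stepL = [i]
      have hstep : (stepL A i).reverse = [(i : ℚ)] := by
        unfold stepL
        rw [if_neg (by tauto)]
        rfl
      rw [hstep, List.foldl_cons, List.foldl_nil]
      have hσid : σ.filter (fun e => e.1 ≠ i) = σ := by
        apply List.filter_eq_self.2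
        intro e he
        have : e.1 ≠ i := by
          intro h
          exact hl (h ▸ Finset.mem_image_of_mem _ (hσ e he))
        simpa using this
      exact pstep_cast A hA i σ c (by rw [hid σ, hσid])
  · -- left-only
    have hl : i ∈ A.image Prod.fst := by
      rcases Finset.mem_union.1 hi with h | h
      · exact h
      · exact absurd h hr
    have hnex : ¬ ∃ f ∈ A, f.2 = i := fun h => hr ((mem_snd_iff A i).2 h)
    have hstep : (stepL A i).reverse = [(i : ℚ)] := by
      unfold stepL
      rw [if_neg (by tauto)]
      rfl
    rw [hstep, List.foldl_cons, List.foldl_nil]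
    exact pstep_cast A hA i σ c
      (map_phi_filter A σ _ i (fun e => g_eq_cast_iff_of_not_right A hnex))

lemma fold_correspond (hA : RightUnique A) :
    ∀ (M : List ℕ), (∀ i ∈ M, i ∈ E A) → ∀ (σ : List (ℕ × ℕ)), (∀ e ∈ σ, e ∈ A) → ∀ (c : ℕ),
    (M.flatMap (fun i => (stepL A i).reverse)).foldl (pstep (A.image (φ A))) (σ.map (φ A), c)
      = ((M.foldl (pstep A) (σ, c)).1.map (φ A), (M.foldl (pstep A) (σ, c)).2) := by
  intro M
  induction M with
  | nil => intro _ σ _ c; rfl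
  | cons i rest ih =>
    intro hM σ hσ c
    rw [List.flatMap_cons, List.foldl_append, List.foldl_cons]
    rw [step_correspond A hA (hM i List.mem_cons_self) σ hσ c]
    exact ih (fun j hj => hM j (List.mem_cons_of_mem _ hj))
      (pstep A (σ, c) i).1 (pstep_mem A hσ) (pstep A (σ, c) i).2

lemma pmaj_split (hA : RightUnique A) : pmajArcs A = pmajArcs (A.image (φ A)) := by
  rw [pmajArcs_eq, pmajArcs_eq]
  rw [sort_E' A, List.reverse_flatMap]
  have hM : ∀ i ∈ ((E A).sort (· ≤ ·)).reverse, i ∈ E A := by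
    intro i hi
    rw [List.mem_reverse] at hi
    exact (Finset.mem_sort _).1 hi
  have key := fold_correspond A hA (((E A).sort (· ≤ ·)).reverse) hM [] (by simp) 0
  simp only [List.map_nil] at key
  show (List.foldl (pstep A) ([], 0) (((E A).sort (· ≤ ·)).reverse)).2 = _
  rw [show (List.reverse ∘ stepL A) = (fun i => (stepL A i).reverse) from rfl] at *
  rw [key]

end SplitAux

/-- right-uniqueness of the standard representation: each vertex is the right endpoint
of at most one arc -/
lemma arcsOf_rightUnique {n : ℕ} (P : Finpartition (Finset.Icc 1 n)) :
    SplitAux.RightUnique (arcsOf P) := by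
  intro e he f hf h2
  simp only [arcsOf, Finset.mem_filter, Finset.mem_product] at he hf
  obtain ⟨-, he1, B, hB, heB, heB2, hno⟩ := he
  obtain ⟨-, hf1, C, hC, hfC, hfC2, hno'⟩ := hf
  have hBC : B = C := P.eq_of_mem_parts hB hC heB2 (h2 ▸ hfC2)
  subst hBC
  rcases lt_trichotomy e.1 f.1 with h | h | h
  · exact absurd (hno f.1 hfC h (h2 ▸ hf1)) (by simp)
  · exact Prod.ext h h2
  · exact absurd (hno' e.1 heB h (h2 ▸ he1)) (by simp)

theorem split_preserves_cr2_pmaj (n : ℕ) (P : Finpartition (Finset.Icc 1 n)) :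
    cr2 (arcsOf P) = cr2 (splitArcs (arcsOf P)) ∧
    pmajArcs (arcsOf P) = pmajArcs (splitArcs (arcsOf P)) := by
  constructor
  · rw [SplitAux.splitArcs_eq]
    exact (SplitAux.cr2_split (arcsOf P)).symm
  · rw [SplitAux.splitArcs_eq]
    exact SplitAux.pmaj_split (arcsOf P) (arcsOf_rightUnique P)
end
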